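/- arXiv:2110.02809 — 3 statements merged into one kernel-verified Lean document; each statement's English description precedes it below -/
import Mathlib

section
/- In the construction reducing Maximum Independent Set in graphs of maximum degree 3 to linearizing a linear order Γ and an interval order Π: for any linear extension Π' of Π, the only possible adjacencies of Γ and Π' are the pairs (p_j, e_j) and (e_j, q_j) for 1 ≤ j ≤ m and the pairs (u_i, v_i) for 1 ≤ i ≤ n; moreover, for each j the pairs (p_j, e_j) and (e_j, q_j) cannot both be adjacencies, so at most m adjacencies come from the pairs involving edge markers. -/
/-- The list of ordered pairs of consecutive elements of a list. -/
def consecPairs {α : Type*} (l : List α) : List (α × α) := l.zip l.tail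

/-- The adjacencies of two permutations `l1` and `l2`, as a list of ordered pairs:
the pairs of consecutive elements of `l1` that are also pairs of consecutive elements of `l2`. -/
def adjPairs {α : Type*} [DecidableEq α] (l1 l2 : List α) : List (α × α) :=
  (consecPairs l1).filter (fun ab => ab ∈ consecPairs l2)

/-- The number of adjacencies of two permutations. -/
def numAdj {α : Type*} [DecidableEq α] (l1 l2 : List α) : ℕ := (adjPairs l1 l2).length

/-- `(a, b)` is an adjacency of the permutations `l1` and `l2` if `a` appears immediately
before `b` in both `l1` and `l2`. -/
def IsAdjacency {α : Type*} (l1 l2 : List α) (a b : α) : Prop :=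
  (a, b) ∈ consecPairs l1 ∧ (a, b) ∈ consecPairs l2

/-- `L` is (the permutation representing) a linear extension of the partial order `rel`:
`L` lists each element exactly once, and whenever `rel a b` holds, `a` appears before `b`. -/
def IsLinearization {α : Type*} (rel : α → α → Prop) (L : List α) : Prop :=
  L.Nodup ∧ (∀ x, x ∈ L) ∧ ∀ a b, rel a b → List.Sublist [a, b] L

/-- The markers of the reduction from Maximum Independent Set: two vertex markers `u i`, `v i`
per vertex, selection markers `p j`, `q j` and an edge marker `e j` per edge, and `n + m`
separation markers `z h`. -/
inductive Marker (n m : ℕ) where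
  | u : Fin n → Marker n m
  | v : Fin n → Marker n m
  | p : Fin m → Marker n m
  | q : Fin m → Marker n m
  | e : Fin m → Marker n m
  | z : Fin (n + m) → Marker n m
  deriving DecidableEq

/-- The linear order `Γ`:
`u_1 v_1 z_1 … u_n v_n z_n  p_1 e_1 q_1 z_{n+1} … p_m e_m q_m z_{n+m}`. -/
def GammaMIS (n m : ℕ) : List (Marker n m) :=
  ((List.finRange n).flatMap fun i => [.u i, .v i, .z (Fin.castAdd m i)]) ++
  ((List.finRange m).flatMap fun j => [.p j, .e j, .q j, .z (Fin.natAdd n j)])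

/-- The block `⟨u_i v_i⟩` of the sequence `Z`: the markers `q j` for edges `j` with `l j = i`,
then `u i`, then `p j e j` for edges `j` with `r j = i`, then `e j q j` for edges `j` with
`l j = i`, then `v i`, then `p j` for edges `j` with `r j = i`. -/
def uvBlock (n m : ℕ) (l r : Fin m → Fin n) (i : Fin n) : List (Marker n m) :=
  (((List.finRange m).filter (fun j => l j = i)).map .q) ++
  [.u i] ++
  (((List.finRange m).filter (fun j => r j = i)).flatMap fun j => [.p j, .e j]) ++
  (((List.finRange m).filter (fun j => l j = i)).flatMap fun j => [.e j, .q j]) ++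
  [.v i] ++
  (((List.finRange m).filter (fun j => r j = i)).map .p)

/-- The sequence `Z = z_1 z_2 … z_{n+m} ⟨u_1 v_1⟩ ⟨u_2 v_2⟩ … ⟨u_n v_n⟩`. -/
def Zseq (n m : ℕ) (l r : Fin m → Fin n) : List (Marker n m) :=
  ((List.finRange (n + m)).map .z) ++ ((List.finRange n).flatMap (uvBlock n m l r))

/-- The sequence `Z₂` obtained from `Z` by replacing each marker occurring only once by two
consecutive copies, so that every marker occurs exactly twice. -/
def Z2 (n m : ℕ) (l r : Fin m → Fin n) : List (Marker n m) :=
  (Zseq n m l r).flatMap fun x => if (Zseq n m l r).count x = 1 then [x, x] else [x]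

/-- The index in `Z₂` of the first occurrence of a marker: the left endpoint of its interval. -/
def firstIdx (n m : ℕ) (l r : Fin m → Fin n) (x : Marker n m) : ℕ :=
  (Z2 n m l r).idxOf x

/-- The index in `Z₂` of the second occurrence of a marker: the right endpoint of its interval. -/
def lastIdx (n m : ℕ) (l r : Fin m → Fin n) (x : Marker n m) : ℕ :=
  (Z2 n m l r).length - 1 - (Z2 n m l r).reverse.idxOf x

/-- The interval order `Π`: marker `x` precedes marker `y` iff the open interval of `x`
(between the indices of its two occurrences in `Z₂`) lies entirely to the left of the open
interval of `y`. -/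
def PiRel (n m : ℕ) (l r : Fin m → Fin n) (x y : Marker n m) : Prop :=
  lastIdx n m l r x ≤ firstIdx n m l r y

open List

lemma mem_ite_dup {α : Type*} (c : α → ℕ) (s : List α) (x : α) :
    (x ∈ s.flatMap fun y => if c y = 1 then [y, y] else [y]) ↔ x ∈ s := by
  simp only [List.mem_flatMap]
  constructor
  · rintro ⟨y, hy, hx⟩
    split at hx <;> simp at hx <;> simpa [hx] using hy
  · intro hx
    exact ⟨x, hx, by split <;> simp⟩

lemma piRel_of_split {n m : ℕ} {l r : Fin m → Fin n} (x y : Marker n m)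
    (P S : List (Marker n m)) (hsplit : Zseq n m l r = P ++ S)
    (hx : x ∉ S) (hy : y ∉ P) : PiRel n m l r x y := by
  classical
  unfold PiRel lastIdx firstIdx Z2
  rw [hsplit, List.flatMap_append]
  set dup := fun t : Marker n m => if (P ++ S).count t = 1 then [t, t] else [t] with hdup
  have hx2 : x ∉ S.flatMap dup := by rw [hdup, mem_ite_dup]; exact hx
  have hy2 : y ∉ P.flatMap dup := by rw [hdup, mem_ite_dup]; exact hy
  have h1 : (P.flatMap dup).length ≤ (P.flatMap dup ++ S.flatMap dup).idxOf y := by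
    rw [List.idxOf_append_of_notMem hy2]; omega
  have h2 : (S.flatMap dup).length ≤ (P.flatMap dup ++ S.flatMap dup).reverse.idxOf x := by
    rw [List.reverse_append, List.idxOf_append_of_notMem (by simpa using hx2)]
    simp
  rw [List.length_append]
  omega


lemma q_mem_uvBlock {n m : ℕ} {l r : Fin m → Fin n} {j : Fin m} {i : Fin n}
    (h : Marker.q j ∈ uvBlock n m l r i) : l j = i := by
  simpa [uvBlock] using h

lemma p_mem_uvBlock {n m : ℕ} {l r : Fin m → Fin n} {j : Fin m} {i : Fin n}
    (h : Marker.p j ∈ uvBlock n m l r i) : r j = i := by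
  simpa [uvBlock] using h

lemma z_not_mem_uvBlock {n m : ℕ} {l r : Fin m → Fin n} {h : Fin (n + m)} {i : Fin n} :
    Marker.z h ∉ uvBlock n m l r i := by
  simp [uvBlock]

lemma val_lt_of_mem_take {K c : ℕ} {x : Fin K} (hx : x ∈ (List.finRange K).take c) :
    x.val < c := by
  rw [List.mem_iff_getElem] at hx
  obtain ⟨i, hi, hEq⟩ := hx
  rw [List.getElem_take] at hEq
  rw [List.getElem_finRange] at hEq
  have : x.val = i := by rw [← hEq]; simp
  simp [List.length_take] at hi
  omega

lemma le_val_of_mem_drop {K c : ℕ} {x : Fin K} (hx : x ∈ (List.finRange K).drop c) :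
    c ≤ x.val := by
  rw [List.mem_iff_getElem] at hx
  obtain ⟨i, hi, hEq⟩ := hx
  rw [List.getElem_drop] at hEq
  rw [List.getElem_finRange] at hEq
  have : x.val = c + i := by rw [← hEq]; simp
  omega

lemma factA {n m : ℕ} {l r : Fin m → Fin n} (h : Fin (n + m)) (y : Marker n m)
    (hy : ∀ h', y ≠ .z h') : PiRel n m l r (.z h) y := by
  apply piRel_of_split _ _ ((List.finRange (n + m)).map .z)
      ((List.finRange n).flatMap (uvBlock n m l r)) rfl
  · simp only [List.mem_flatMap]
    rintro ⟨i, -, hmem⟩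
    exact z_not_mem_uvBlock hmem
  · simp only [List.mem_map]
    rintro ⟨h', -, hEq⟩
    exact hy h' hEq.symm

lemma factB {n m : ℕ} {l r : Fin m → Fin n} (h h' : Fin (n + m)) (hlt : h.val < h'.val) :
    PiRel n m l r (.z h) (.z h') := by
  apply piRel_of_split _ _ (((List.finRange (n + m)).take (h.val + 1)).map .z)
      ((((List.finRange (n + m)).drop (h.val + 1)).map .z) ++
        (List.finRange n).flatMap (uvBlock n m l r))
  · unfold Zseq
    rw [← List.append_assoc, ← List.map_append, List.take_append_drop]
  · simp only [List.mem_append, List.mem_map, List.mem_flatMap]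
    rintro (⟨h2, hmem, hEq⟩ | ⟨i, -, hmem⟩)
    · cases hEq
      have := le_val_of_mem_drop hmem
      omega
    · exact z_not_mem_uvBlock hmem
  · simp only [List.mem_map]
    rintro ⟨h2, hmem, hEq⟩
    cases hEq
    have := val_lt_of_mem_take hmem
    omega

lemma factC {n m : ℕ} {l r : Fin m → Fin n} (j : Fin m) (hj : l j < r j) :
    PiRel n m l r (.q j) (.p j) := by
  apply piRel_of_split _ _
      (((List.finRange (n + m)).map .z) ++
        (((List.finRange n).take ((l j).val + 1)).flatMap (uvBlock n m l r)))
      ((((List.finRange n).drop ((l j).val + 1)).flatMap (uvBlock n m l r)))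
  · unfold Zseq
    rw [List.append_assoc, ← List.flatMap_append, List.take_append_drop]
  · simp only [List.mem_flatMap]
    rintro ⟨i, hmem, hq⟩
    have h1 := q_mem_uvBlock hq
    have h2 := le_val_of_mem_drop hmem
    have h3 : (l j).val = i.val := congrArg Fin.val h1
    omega
  · simp only [List.mem_append, List.mem_map, List.mem_flatMap]
    rintro (⟨h2, -, hEq⟩ | ⟨i, hmem, hp⟩)
    · cases hEq
    · have h1 := p_mem_uvBlock hp
      have h2 := val_lt_of_mem_take hmem
      have h3 : (r j).val = i.val := congrArg Fin.val h1
      have h4 : (l j).val < (r j).val := hj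
      omega

lemma pos_lt_of_sublist {α : Type*} [DecidableEq α] {L : List α} (hnd : L.Nodup)
    {x y : α} (h : List.Sublist [x, y] L) : L.idxOf x < L.idxOf y := by
  have hpw : L.Pairwise (fun a b => L.idxOf a < L.idxOf b) := by
    rw [List.pairwise_iff_getElem]
    intro i j hi hj hij
    rw [List.Nodup.idxOf_getElem hnd, List.Nodup.idxOf_getElem hnd]
    exact hij
  exact List.pairwise_iff_forall_sublist.mp hpw h

lemma consec_idx {α : Type*} [DecidableEq α] {L : List α} (hnd : L.Nodup)
    {a b : α} (h : (a, b) ∈ consecPairs L) : L.idxOf b = L.idxOf a + 1 := by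
  rw [consecPairs, List.mem_iff_getElem] at h
  obtain ⟨i, hi, hEq⟩ := h
  have hi2 : i < L.length - 1 := by
    simpa [List.length_zip, List.length_tail] using hi
  have hi' : i + 1 < L.length := by omega
  rw [List.getElem_zip] at hEq
  have ha : L[i]'(by omega) = a := congrArg Prod.fst hEq
  have hb : L.tail[i]'(by simp [List.length_tail]; omega) = b := congrArg Prod.snd hEq
  rw [List.getElem_tail] at hb
  rw [← ha, ← hb, List.Nodup.idxOf_getElem hnd, List.Nodup.idxOf_getElem hnd]

lemma consec_of_chain' {α : Type*} {R : α → α → Prop} {L : List α} (hc : L.Chain' R)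
    {a b : α} (h : (a, b) ∈ consecPairs L) : R a b := by
  rw [consecPairs, List.mem_iff_getElem] at h
  obtain ⟨i, hi, hEq⟩ := h
  have hi2 : i < L.length - 1 := by
    simpa [List.length_zip, List.length_tail] using hi
  have hi' : i + 1 < L.length := by omega
  rw [List.getElem_zip] at hEq
  have ha : L[i]'(by omega) = a := congrArg Prod.fst hEq
  have hb : L.tail[i]'(by simp [List.length_tail]; omega) = b := congrArg Prod.snd hEq
  rw [List.getElem_tail] at hb
  change List.IsChain R L at hc
  rw [List.isChain_iff_getElem] at hc
  have := hc i hi'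
  rwa [ha, hb] at this

lemma chain'_flatMap' {α ι : Type*} (f : ι → List α) (R : α → α → Prop) (s : List ι)
    (h1 : ∀ i ∈ s, (f i).Chain' R) (h2 : ∀ i ∈ s, f i ≠ [])
    (h3 : s.Chain' (fun i i' => ∀ x ∈ (f i).getLast?, ∀ y ∈ (f i').head?, R x y)) :
    (s.flatMap f).Chain' R := by
  induction s with
  | nil => exact List.isChain_nil
  | cons i t ih =>
    rw [List.flatMap_cons]
    apply List.IsChain.append (h1 i (by simp))
        (ih (fun i' hi' => h1 i' (by simp [hi'])) (fun i' hi' => h2 i' (by simp [hi']))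
          (h3.tail))
    intro x hx y hy
    cases t with
    | nil => simp at hy
    | cons i' t' =>
      have hJ := List.isChain_cons_cons.mp h3 |>.1
      apply hJ x hx
      rw [List.flatMap_cons, List.head?_append] at hy
      cases hhd : (f i').head? with
      | none => exact absurd (List.head?_eq_none_iff.mp hhd) (h2 i' (by simp))
      | some z =>
        rw [hhd] at hy
        simp only [Option.or] at hy
        exact hy

def gBlock (n m : ℕ) : Sum (Fin n) (Fin m) → List (Marker n m) :=
  Sum.elim (fun i => [.u i, .v i, .z (Fin.castAdd m i)])
    (fun j => [.p j, .e j, .q j, .z (Fin.natAdd n j)])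

def zval (n m : ℕ) : Sum (Fin n) (Fin m) → ℕ := Sum.elim Fin.val (fun j => n + j.val)

def gS (n m : ℕ) : List (Sum (Fin n) (Fin m)) :=
  (List.finRange n).map .inl ++ (List.finRange m).map .inr

lemma gamma_eq (n m : ℕ) : GammaMIS n m = (gS n m).flatMap (gBlock n m) := by
  simp [GammaMIS, gS, gBlock, List.flatMap_append, List.flatMap_map, Function.comp]

def RGam (n m : ℕ) (a b : Marker n m) : Prop :=
  ((∃ j, a = .p j ∧ b = .e j) ∨ (∃ j, a = .e j ∧ b = .q j) ∨ (∃ i, a = .u i ∧ b = .v i)) ∨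
  ((∃ h, b = .z h) ∧ ∀ h, a ≠ .z h) ∨
  ((∃ h, a = .z h ∧ h.val + 1 < n + m) ∧ ∀ h, b ≠ .z h)

lemma chain_gamma (n m : ℕ) : (GammaMIS n m).Chain' (RGam n m) := by
  rw [gamma_eq]
  apply chain'_flatMap'
  · rintro (i | j) -
    · refine List.isChain_cons_cons.mpr ⟨?_, List.isChain_cons_cons.mpr ⟨?_, List.isChain_singleton _⟩⟩
      · exact Or.inl (Or.inr (Or.inr ⟨i, rfl, rfl⟩))
      · exact Or.inr (Or.inl ⟨⟨_, rfl⟩, by simp⟩)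
    · refine List.isChain_cons_cons.mpr ⟨?_, List.isChain_cons_cons.mpr ⟨?_,
        List.isChain_cons_cons.mpr ⟨?_, List.isChain_singleton _⟩⟩⟩
      · exact Or.inl (Or.inl ⟨j, rfl, rfl⟩)
      · exact Or.inl (Or.inr (Or.inl ⟨j, rfl, rfl⟩))
      · exact Or.inr (Or.inl ⟨⟨_, rfl⟩, by simp⟩)
  · rintro (i | j) - <;> simp [gBlock]
  · have hpw : (gS n m).Pairwise
        (fun i i' => zval n m i < zval n m i' ∧ zval n m i' < n + m) := by
      rw [gS, List.pairwise_append]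
      refine ⟨?_, ?_, ?_⟩
      · rw [List.pairwise_map]
        refine (List.pairwise_lt_finRange n).imp ?_
        intro a b hab
        have h1 : a.val < b.val := hab
        have h2 : b.val < n := b.isLt
        constructor <;> simp only [zval, Sum.elim_inl] <;> omega
      · rw [List.pairwise_map]
        refine (List.pairwise_lt_finRange m).imp ?_
        intro a b hab
        have h1 : a.val < b.val := hab
        have h2 : b.val < m := b.isLt
        constructor <;> simp only [zval, Sum.elim_inr] <;> omega
      · simp only [List.mem_map]
        rintro x ⟨i, -, rfl⟩ y ⟨j, -, rfl⟩
        have h1 : i.val < n := i.isLt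
        have h2 : j.val < m := j.isLt
        constructor <;> simp only [zval, Sum.elim_inl, Sum.elim_inr] <;> omega
    refine (hpw.isChain).imp ?_
    rintro (i | j) (i' | j') ⟨hlt, hub⟩ x hx y hy <;>
      simp only [zval, Sum.elim_inl, Sum.elim_inr] at hlt hub <;>
      simp only [gBlock, Sum.elim_inl, Sum.elim_inr, List.getLast?, List.head?] at hx hy <;>
      simp only [Option.mem_def, Option.some.injEq] at hx hy <;>
      subst hx <;> subst hy <;>
      refine Or.inr (Or.inr ⟨⟨_, rfl, ?_⟩, by simp⟩) <;>
      simp only [Fin.coe_castAdd, Fin.coe_natAdd] <;> omega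
/-- For any linear extension `L` of the interval order `Π` of the reduction, the only possible
adjacencies of `Γ` and `L` are the pairs `(p j, e j)`, `(e j, q j)` for `1 ≤ j ≤ m` and
`(u i, v i)` for `1 ≤ i ≤ n`; moreover, for each `j` the pairs `(p j, e j)` and `(e j, q j)`
cannot both be adjacencies, so at most `m` adjacencies involve edge markers. -/
theorem only_possible_adjacencies_MIS
    (n m : ℕ) (l r : Fin m → Fin n)
    (hlr : ∀ j, l j < r j)
    (hsimple : ∀ j j', l j = l j' → r j = r j' → j = j')
    (hdeg : ∀ i : Fin n,
      (Finset.univ.filter (fun j : Fin m => l j = i ∨ r j = i)).card ≤ 3)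
    (L : List (Marker n m)) (hL : IsLinearization (PiRel n m l r) L) :
    (∀ a b : Marker n m, IsAdjacency (GammaMIS n m) L a b →
      (∃ j, a = .p j ∧ b = .e j) ∨ (∃ j, a = .e j ∧ b = .q j) ∨
      (∃ i, a = .u i ∧ b = .v i)) ∧
    (∀ j : Fin m, ¬ (IsAdjacency (GammaMIS n m) L (.p j) (.e j) ∧
      IsAdjacency (GammaMIS n m) L (.e j) (.q j))) ∧
    Nat.card {j : Fin m // IsAdjacency (GammaMIS n m) L (.p j) (.e j) ∨
      IsAdjacency (GammaMIS n m) L (.e j) (.q j)} ≤ m := by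
  obtain ⟨hnd, hcmp, hrel⟩ := hL
  have keyA : ∀ (h : Fin (n + m)) (y : Marker n m), (∀ h', y ≠ .z h') →
      L.idxOf (Marker.z h) < L.idxOf y := fun h y hy =>
    pos_lt_of_sublist hnd (hrel _ _ (factA h y hy))
  have main : ∀ a b : Marker n m, IsAdjacency (GammaMIS n m) L a b →
      (∃ j, a = .p j ∧ b = .e j) ∨ (∃ j, a = .e j ∧ b = .q j) ∨
      (∃ i, a = .u i ∧ b = .v i) := by
    intro a b ⟨hGa, hLa⟩
    have hR : RGam n m a b := consec_of_chain' (chain_gamma n m) hGa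
    have hidx : L.idxOf b = L.idxOf a + 1 := consec_idx hnd hLa
    rcases hR with h | ⟨⟨h1, hb⟩, ha⟩ | ⟨⟨h1, ha, hbig⟩, hb⟩
    · exact h
    · exfalso
      subst hb
      have := keyA h1 a ha
      omega
    · exfalso
      subst ha
      have hlt1 : L.idxOf (Marker.z h1) < L.idxOf (Marker.z ⟨h1.val + 1, hbig⟩) :=
        pos_lt_of_sublist hnd (hrel _ _ (factB h1 ⟨h1.val + 1, hbig⟩ (by simp)))
      have hlt2 := keyA ⟨h1.val + 1, hbig⟩ b hb
      omega
  refine ⟨main, ?_, ?_⟩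
  · rintro j ⟨h1, h2⟩
    have e1 : L.idxOf (Marker.e j) = L.idxOf (Marker.p j) + 1 := consec_idx hnd h1.2
    have e2 : L.idxOf (Marker.q j) = L.idxOf (Marker.e j) + 1 := consec_idx hnd h2.2
    have e3 : L.idxOf (Marker.q j) < L.idxOf (Marker.p j) :=
      pos_lt_of_sublist hnd (hrel _ _ (factC j (hlr j)))
    omega
  · calc Nat.card {j : Fin m // IsAdjacency (GammaMIS n m) L (.p j) (.e j) ∨
          IsAdjacency (GammaMIS n m) L (.e j) (.q j)}
        ≤ Nat.card (Fin m) := Nat.card_le_card_of_injective _ Subtype.val_injective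
      _ = m := by simp [Nat.card_eq_fintype_card]
end

section
/- In the construction reducing (3,2)-SAT to linearizing two weak orders Γ and Π: for any two linear extensions of Γ and Π respectively and any variable index i, there are at most four adjacencies from ⟨ab⟩_i ∪ ⟨pqrstuv⟩_i; moreover, if there are exactly four such adjacencies, then they are either {(a_i^+, b_i^+), (q_i, r_i), (s_i, t_i), (u_i, v_i)} or {(p_i, q_i), (r_i, s_i), (t_i, u_i), (a_i^-, b_i^-)}. -/
/-- The markers of the reduction from (3,2)-SAT: per variable `i`, seven variable markers
`p i, q i, r i, s i, t i, u i, v i`, selection markers `ap i = a_i^+`, `bp i = b_i^+`,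
`am i = a_i^-`, `bm i = b_i^-`, and a dummy marker `d i`; per clause `j`, literal markers
`e j h = e_j^h` and `f j h = f_j^h` for `h ∈ {1,2}`, and a separation marker `z j`. -/
inductive WMarker (n m : ℕ) where
  | p : Fin n → WMarker n m
  | q : Fin n → WMarker n m
  | r : Fin n → WMarker n m
  | s : Fin n → WMarker n m
  | t : Fin n → WMarker n m
  | u : Fin n → WMarker n m
  | v : Fin n → WMarker n m
  | ap : Fin n → WMarker n m
  | bp : Fin n → WMarker n m
  | am : Fin n → WMarker n m
  | bm : Fin n → WMarker n m
  | d : Fin n → WMarker n m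
  | e : Fin m → Fin 2 → WMarker n m
  | f : Fin m → Fin 2 → WMarker n m
  | z : Fin m → WMarker n m
  deriving DecidableEq

/-- The weak order `Γ`, given as a rank function assigning to each marker the index of its
bucket. The buckets are, in order: for each clause `j`, `E_j = {e j 1, e j 2}`,
`F_j = {f j 1, f j 2}`, `{z j}`; then for each variable `i`, the eight buckets
`{p i, ap i}`, `{q i, bp i}`, `{r i}`, `{s i}`, `{t i}`, `{u i, am i}`, `{v i, bm i}`,
`{d i}`. Two markers are related in `Γ` iff the rank of the first is smaller. -/
def rankGamma (n m : ℕ) : WMarker n m → ℕ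
  | .e j _ => 3 * j.val
  | .f j _ => 3 * j.val + 1
  | .z j => 3 * j.val + 2
  | .p i => 3 * m + 8 * i.val
  | .ap i => 3 * m + 8 * i.val
  | .q i => 3 * m + 8 * i.val + 1
  | .bp i => 3 * m + 8 * i.val + 1
  | .r i => 3 * m + 8 * i.val + 2
  | .s i => 3 * m + 8 * i.val + 3
  | .t i => 3 * m + 8 * i.val + 4
  | .u i => 3 * m + 8 * i.val + 5
  | .am i => 3 * m + 8 * i.val + 5
  | .v i => 3 * m + 8 * i.val + 6
  | .bm i => 3 * m + 8 * i.val + 6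
  | .d i => 3 * m + 8 * i.val + 7

/-- Offset (within the nine buckets `P_i Q_i R_i S_i T_i U_i V_i A_i B_i` of the selection
gadget `⟨Y_i⟩`) of the bucket containing the literal marker `e j h`, in terms of the slot
`g ∈ {1,2,3}` of the literal occurrence in its variable and its polarity: the marker of the
(positive) first occurrence goes to `P_i`, the marker of the (negative) third occurrence goes
to `U_i`, and the marker of the second occurrence goes to `R_i` if positive, `S_i` if negative. -/
def eOffset (g : Fin 3) (b : Bool) : ℕ :=
  if g.val = 0 then 0 else if g.val = 1 then (if b then 2 else 3) else 5

/-- Offset of the bucket containing the literal marker `f j h`: `Q_i` for the first occurrence,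
`V_i` for the third, and `S_i` (if positive) or `T_i` (if negative) for the second. -/
def fOffset (g : Fin 3) (b : Bool) : ℕ :=
  if g.val = 0 then 1 else if g.val = 1 then (if b then 3 else 4) else 6

/-- The weak order `Π`, given as a rank function assigning to each marker the index of its
bucket. The buckets are, in order: for each variable `i`, the nine buckets
`P_i, Q_i, R_i, S_i, T_i, U_i, V_i, A_i = {ap i, am i}, B_i = {bp i, bm i}`, where
`P_i`/`Q_i` also contain the `e`/`f` markers of the positive first literal occurrence of
variable `i`, `U_i`/`V_i` also contain the `e`/`f` markers of the negative third occurrence,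
the `e`/`f` markers of the second occurrence go to `R_i`/`S_i` (with `d i` in `T_i`) if that
occurrence is positive and to `S_i`/`T_i` (with `d i` in `R_i`) if negative; finally the
buckets `{z 1}, …, {z m}`. Here `var j h` and `slot j h` are the variable and the slot
(first/second/third occurrence) of the `h`-th literal of clause `j`, and `pol i g` is the
polarity of the `g`-th occurrence of variable `i`. -/
def rankPi (n m : ℕ) (var : Fin m → Fin 2 → Fin n) (slot : Fin m → Fin 2 → Fin 3)
    (pol : Fin n → Fin 3 → Bool) : WMarker n m → ℕ
  | .p i => 9 * i.val
  | .q i => 9 * i.val + 1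
  | .r i => 9 * i.val + 2
  | .s i => 9 * i.val + 3
  | .t i => 9 * i.val + 4
  | .u i => 9 * i.val + 5
  | .v i => 9 * i.val + 6
  | .ap i => 9 * i.val + 7
  | .am i => 9 * i.val + 7
  | .bp i => 9 * i.val + 8
  | .bm i => 9 * i.val + 8
  | .d i => 9 * i.val + (if pol i 1 then 4 else 2)
  | .e j h => 9 * (var j h).val + eOffset (slot j h) (pol (var j h) (slot j h))
  | .f j h => 9 * (var j h).val + fOffset (slot j h) (pol (var j h) (slot j h))
  | .z j => 9 * n + j.val

/-- The number of clauses satisfied by the assignment `σ`: clause `j` is satisfied if one of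
its two literals evaluates to true, i.e., `σ (var j h) = pol (var j h) (slot j h)` for some
`h`. -/
def satCount (n m : ℕ) (var : Fin m → Fin 2 → Fin n) (slot : Fin m → Fin 2 → Fin 3)
    (pol : Fin n → Fin 3 → Bool) (σ : Fin n → Bool) : ℕ :=
  (Finset.univ.filter (fun j : Fin m =>
    σ (var j 0) = pol (var j 0) (slot j 0) ∨ σ (var j 1) = pol (var j 1) (slot j 1))).card

/-- The chain `p_i q_i r_i s_i t_i u_i v_i` of variable markers of variable `i`;
the set `⟨pqrstuv⟩_i` of candidate adjacencies consists of its consecutive pairs. -/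
def chain (n m : ℕ) (i : Fin n) : List (WMarker n m) :=
  [.p i, .q i, .r i, .s i, .t i, .u i, .v i]

/-- The two candidate adjacencies `⟨ab⟩_i = {(a_i^+, b_i^+), (a_i^-, b_i^-)}`. -/
def abPairs (n m : ℕ) (i : Fin n) : List (WMarker n m × WMarker n m) :=
  [(.ap i, .bp i), (.am i, .bm i)]



lemma consec_idxOf {α : Type*} [DecidableEq α] :
    ∀ {l : List α}, l.Nodup → ∀ {a b : α}, (a, b) ∈ consecPairs l →
      l.idxOf b = l.idxOf a + 1
  | [], _, a, b, h => by simp [consecPairs] at h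
  | [x], _, a, b, h => by simp [consecPairs] at h
  | x :: y :: t, hnd, a, b, h => by
    have h' : (a, b) = (x, y) ∨ (a, b) ∈ consecPairs (y :: t) := by
      simpa [consecPairs] using h
    rcases h' with h' | h'
    · obtain ⟨rfl, rfl⟩ := Prod.mk.injEq .. ▸ h'
      have hxy : a ≠ b := by
        intro e; exact (List.nodup_cons.mp hnd).1 (e ▸ List.mem_cons_self)
      rw [List.idxOf_cons_self, List.idxOf_cons_ne _ hxy,
        List.idxOf_cons_self]
    · have hnd' := (List.nodup_cons.mp hnd).2
      have hmem : a ∈ y :: t ∧ b ∈ y :: t := by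
        have := List.of_mem_zip h'
        exact ⟨this.1, List.mem_of_mem_tail this.2⟩
      have hax : x ≠ a := fun e => (List.nodup_cons.mp hnd).1 (e ▸ hmem.1)
      have hbx : x ≠ b := fun e => (List.nodup_cons.mp hnd).1 (e ▸ hmem.2)
      rw [List.idxOf_cons_ne _ hax, List.idxOf_cons_ne _ hbx,
        consec_idxOf hnd' h']

lemma mem_of_consec {α : Type*} {l : List α} {a b : α}
    (h : (a, b) ∈ consecPairs l) : a ∈ l ∧ b ∈ l := by
  have := List.of_mem_zip h
  exact ⟨this.1, List.mem_of_mem_tail this.2⟩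

lemma sublist_idxOf_lt {α : Type*} [DecidableEq α] :
    ∀ {l : List α}, l.Nodup → ∀ {a b : α}, List.Sublist [a, b] l →
      l.idxOf a < l.idxOf b
  | [], _, a, b, h => by simp at h
  | x :: t, hnd, a, b, h => by
    rcases List.nodup_cons.mp hnd with ⟨hx, hnd'⟩
    cases h with
    | cons _ h' =>
      have hmem := h'.subset
      have ha : a ∈ t := hmem (by simp)
      have hb : b ∈ t := hmem (by simp)
      rw [List.idxOf_cons_ne _ (by rintro rfl; exact hx ha),
        List.idxOf_cons_ne _ (by rintro rfl; exact hx hb)]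
      exact Nat.succ_lt_succ (sublist_idxOf_lt hnd' h')
    | cons_cons _ h' =>
      have hb : b ∈ t := h'.subset (by simp)
      rw [List.idxOf_cons_self, List.idxOf_cons_ne _ (by rintro rfl; exact hx hb)]
      exact Nat.succ_pos _


section conflicts
variable {α : Type*} [DecidableEq α] {rank : α → ℕ} {L : List α}

lemma lin_lt (hL : IsLinearization (fun x y => rank x < rank y) L) {a b : α}
    (h : rank a < rank b) : L.idxOf a < L.idxOf b :=
  sublist_idxOf_lt hL.1 (hL.2.2 a b h)

lemma conflict_same_rank (hL : IsLinearization (fun x y => rank x < rank y) L)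
    {a b a' b' : α} (ha : rank a = rank a') (hb : rank b = rank b')
    (hab : rank a < rank b) (hne : a ≠ a')
    (h1 : (a, b) ∈ consecPairs L) (h2 : (a', b') ∈ consecPairs L) : False := by
  have e1 := consec_idxOf hL.1 h1
  have e2 := consec_idxOf hL.1 h2
  have l1 : L.idxOf a < L.idxOf b' := lin_lt hL (by omega)
  have l2 : L.idxOf a' < L.idxOf b := lin_lt hL (by omega)
  have : L.idxOf a = L.idxOf a' := by omega
  exact hne ((List.idxOf_inj (mem_of_consec h1).1).mp this)

lemma conflict_between (hL : IsLinearization (fun x y => rank x < rank y) L)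
    {a b c w : α} (h1 : (a, b) ∈ consecPairs L) (h2 : (b, c) ∈ consecPairs L)
    (hw1 : rank a < rank w) (hw2 : rank w < rank c) (hne : w ≠ b) : False := by
  have e1 := consec_idxOf hL.1 h1
  have e2 := consec_idxOf hL.1 h2
  have l1 : L.idxOf a < L.idxOf w := lin_lt hL hw1
  have l2 : L.idxOf w < L.idxOf c := lin_lt hL hw2
  have : L.idxOf w = L.idxOf b := by omega
  exact hne ((List.idxOf_inj (hL.2.1 w)).mp this)

end conflicts

lemma consecPairs_nodup {α : Type*} {l : List α} (h : l.Nodup) :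
    (consecPairs l).Nodup := by
  apply List.Nodup.of_map Prod.snd
  have : (consecPairs l).map Prod.snd = l.tail :=
    List.map_snd_zip (l.length_tail ▸ Nat.sub_le _ _)
  rw [this]
  exact h.sublist (List.tail_sublist l)



lemma filter_length_cons {α : Type*} (p : α → Bool) (a : α) (l : List α) :
    (List.filter p (a :: l)).length = (cond (p a) 1 0) + (List.filter p l).length := by
  cases h : p a <;> simp [List.filter_cons, h] <;> omega

lemma core_bool : ∀ b1 b2 b3 b4 b5 b6 b7 b8 : Bool,
    ¬(b1 = true ∧ b2 = true) → ¬(b1 = true ∧ b3 = true) →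
    ¬(b2 = true ∧ b8 = true) → ¬(b3 = true ∧ b4 = true) →
    ¬(b4 = true ∧ b5 = true) → ¬(b5 = true ∧ b6 = true) →
    ¬(b6 = true ∧ b7 = true) → ¬(b7 = true ∧ b8 = true) →
    (cond b1 1 0 + (cond b2 1 0 + (cond b3 1 0 + (cond b4 1 0 + (cond b5 1 0 +
      (cond b6 1 0 + (cond b7 1 0 + (cond b8 1 0 + 0))))))) ≤ 4) ∧
    ((cond b1 1 0 + (cond b2 1 0 + (cond b3 1 0 + (cond b4 1 0 + (cond b5 1 0 +
      (cond b6 1 0 + (cond b7 1 0 + (cond b8 1 0 + 0))))))) = 4) →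
      (b1 = true ∧ b2 = false ∧ b3 = false ∧ b4 = true ∧ b5 = false ∧ b6 = true ∧
        b7 = false ∧ b8 = true) ∨
      (b1 = false ∧ b2 = true ∧ b3 = true ∧ b4 = false ∧ b5 = true ∧ b6 = false ∧
        b7 = true ∧ b8 = false)) := by
  intro b1 b2 b3 b4 b5 b6 b7 b8
  cases b1 <;> cases b2 <;> cases b3 <;> cases b4 <;> cases b5 <;> cases b6 <;>
    cases b7 <;> cases b8 <;> decide


/-- For any linear extensions `LG` of `Γ` and `LP` of `Π` in the (3,2)-SAT reduction and any
variable index `i`, there are at most four adjacencies from `⟨ab⟩_i ∪ ⟨pqrstuv⟩_i`; moreover,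
if there are exactly four, then they are either
`{(a_i^+, b_i^+), (q_i, r_i), (s_i, t_i), (u_i, v_i)}` or
`{(p_i, q_i), (r_i, s_i), (t_i, u_i), (a_i^-, b_i^-)}`. -/
theorem at_most_four_adjacencies_per_variable
    (n m : ℕ)
    (occ : Fin n → Fin 3 → Fin m × Fin 2)
    (var : Fin m → Fin 2 → Fin n) (slot : Fin m → Fin 2 → Fin 3)
    (pol : Fin n → Fin 3 → Bool)
    (hvar : ∀ i g, var (occ i g).1 (occ i g).2 = i)
    (hslot : ∀ i g, slot (occ i g).1 (occ i g).2 = g)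
    (hocc : ∀ j h, occ (var j h) (slot j h) = (j, h))
    (hpol0 : ∀ i, pol i 0 = true)
    (hpol2 : ∀ i, pol i 2 = false)
    (hdiffvar : ∀ j, var j 0 ≠ var j 1)
    (hdiffcl : ∀ i, Function.Injective fun g => (occ i g).1)
    (LG LP : List (WMarker n m))
    (hLG : IsLinearization (fun a b => rankGamma n m a < rankGamma n m b) LG)
    (hLP : IsLinearization
      (fun a b => rankPi n m var slot pol a < rankPi n m var slot pol b) LP)
    (i : Fin n) :
    ((adjPairs LG LP).filter (fun ab =>
        ab ∈ abPairs n m i ∨ ab ∈ consecPairs (chain n m i))).length ≤ 4 ∧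
    (((adjPairs LG LP).filter (fun ab =>
        ab ∈ abPairs n m i ∨ ab ∈ consecPairs (chain n m i))).length = 4 →
      (∀ ab : WMarker n m × WMarker n m,
        (ab ∈ (adjPairs LG LP).filter (fun ab =>
            ab ∈ abPairs n m i ∨ ab ∈ consecPairs (chain n m i)) ↔
          ab ∈ [((.ap i : WMarker n m), (.bp i : WMarker n m)),
            (.q i, .r i), (.s i, .t i), (.u i, .v i)])) ∨
      (∀ ab : WMarker n m × WMarker n m,
        (ab ∈ (adjPairs LG LP).filter (fun ab =>
            ab ∈ abPairs n m i ∨ ab ∈ consecPairs (chain n m i)) ↔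
          ab ∈ [((.p i : WMarker n m), (.q i : WMarker n m)),
            (.r i, .s i), (.t i, .u i), (.am i, .bm i)]))) := by

  classical
  set P := adjPairs LG LP with hPdef
  have hPc : ∀ ab : WMarker n m × WMarker n m,
      ab ∈ P → ab ∈ consecPairs LG ∧ ab ∈ consecPairs LP := by
    intro ab h
    rw [hPdef] at h
    simp only [adjPairs, List.mem_filter, decide_eq_true_eq] at h
    exact h
  -- rank abbreviations
  set rG := rankGamma n m with hrG
  set rP := rankPi n m var slot pol with hrP
  -- rank computations for companions
  have hre1 : rP (.f (occ i 0).1 (occ i 0).2) = 9 * i.val + 1 := by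
    simp [hrP, rankPi, hvar, hslot, hpol0, fOffset]
  have hre3 : rP (.e (occ i 2).1 (occ i 2).2) = 9 * i.val + 5 := by
    simp [hrP, rankPi, hvar, hslot, hpol2, eOffset]
  -- conflicts
  have c_ab : ¬((WMarker.ap i, WMarker.bp i) ∈ P ∧ (WMarker.am i, WMarker.bm i) ∈ P) := by
    rintro ⟨h1, h2⟩
    refine conflict_same_rank (rank := rP) hLP (a' := WMarker.am i) (b' := WMarker.bm i)
      ?_ ?_ ?_ (by simp) (hPc _ h1).2 (hPc _ h2).2 <;> simp [hrP, rankPi]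
  have c_ab_pq : ¬((WMarker.ap i, WMarker.bp i) ∈ P ∧ (WMarker.p i, WMarker.q i) ∈ P) := by
    rintro ⟨h1, h2⟩
    refine conflict_same_rank (rank := rG) hLG (a' := WMarker.p i) (b' := WMarker.q i)
      ?_ ?_ ?_ (by simp) (hPc _ h1).1 (hPc _ h2).1 <;> simp [hrG, rankGamma]
  have c_ab_uv : ¬((WMarker.am i, WMarker.bm i) ∈ P ∧ (WMarker.u i, WMarker.v i) ∈ P) := by
    rintro ⟨h1, h2⟩
    refine conflict_same_rank (rank := rG) hLG (a' := WMarker.u i) (b' := WMarker.v i)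
      ?_ ?_ ?_ (by simp) (hPc _ h1).1 (hPc _ h2).1 <;> simp [hrG, rankGamma]
  have c_pq_qr : ¬((WMarker.p i, WMarker.q i) ∈ P ∧ (WMarker.q i, WMarker.r i) ∈ P) := by
    rintro ⟨h1, h2⟩
    refine conflict_between (rank := rP) hLP (hPc _ h1).2 (hPc _ h2).2
      (w := .f (occ i 0).1 (occ i 0).2) ?_ ?_ (by simp)
    · rw [hre1]; simp [hrP, rankPi]
    · rw [hre1]; simp [hrP, rankPi]
  have c_qr_rs : ¬((WMarker.q i, WMarker.r i) ∈ P ∧ (WMarker.r i, WMarker.s i) ∈ P) := by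
    rintro ⟨h1, h2⟩
    cases hp : pol i 1 with
    | true =>
      have hw : rP (.e (occ i 1).1 (occ i 1).2) = 9 * i.val + 2 := by
        simp [hrP, rankPi, hvar, hslot, hp, eOffset]
      refine conflict_between (rank := rP) hLP (hPc _ h1).2 (hPc _ h2).2
        (w := .e (occ i 1).1 (occ i 1).2) ?_ ?_ (by simp)
      · rw [hw]; simp [hrP, rankPi]
      · rw [hw]; simp [hrP, rankPi]
    | false =>
      have hw : rP (.d i) = 9 * i.val + 2 := by
        simp [hrP, rankPi, hp]
      refine conflict_between (rank := rP) hLP (hPc _ h1).2 (hPc _ h2).2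
        (w := .d i) ?_ ?_ (by simp)
      · rw [hw]; simp [hrP, rankPi]
      · rw [hw]; simp [hrP, rankPi]
  have c_rs_st : ¬((WMarker.r i, WMarker.s i) ∈ P ∧ (WMarker.s i, WMarker.t i) ∈ P) := by
    rintro ⟨h1, h2⟩
    cases hp : pol i 1 with
    | true =>
      have hw : rP (.f (occ i 1).1 (occ i 1).2) = 9 * i.val + 3 := by
        simp [hrP, rankPi, hvar, hslot, hp, fOffset]
      refine conflict_between (rank := rP) hLP (hPc _ h1).2 (hPc _ h2).2
        (w := .f (occ i 1).1 (occ i 1).2) ?_ ?_ (by simp)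
      · rw [hw]; simp [hrP, rankPi]
      · rw [hw]; simp [hrP, rankPi]
    | false =>
      have hw : rP (.e (occ i 1).1 (occ i 1).2) = 9 * i.val + 3 := by
        simp [hrP, rankPi, hvar, hslot, hp, eOffset]
      refine conflict_between (rank := rP) hLP (hPc _ h1).2 (hPc _ h2).2
        (w := .e (occ i 1).1 (occ i 1).2) ?_ ?_ (by simp)
      · rw [hw]; simp [hrP, rankPi]
      · rw [hw]; simp [hrP, rankPi]
  have c_st_tu : ¬((WMarker.s i, WMarker.t i) ∈ P ∧ (WMarker.t i, WMarker.u i) ∈ P) := by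
    rintro ⟨h1, h2⟩
    cases hp : pol i 1 with
    | true =>
      have hw : rP (.d i) = 9 * i.val + 4 := by
        simp [hrP, rankPi, hp]
      refine conflict_between (rank := rP) hLP (hPc _ h1).2 (hPc _ h2).2
        (w := .d i) ?_ ?_ (by simp)
      · rw [hw]; simp [hrP, rankPi]
      · rw [hw]; simp [hrP, rankPi]
    | false =>
      have hw : rP (.f (occ i 1).1 (occ i 1).2) = 9 * i.val + 4 := by
        simp [hrP, rankPi, hvar, hslot, hp, fOffset]
      refine conflict_between (rank := rP) hLP (hPc _ h1).2 (hPc _ h2).2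
        (w := .f (occ i 1).1 (occ i 1).2) ?_ ?_ (by simp)
      · rw [hw]; simp [hrP, rankPi]
      · rw [hw]; simp [hrP, rankPi]
  have c_tu_uv : ¬((WMarker.t i, WMarker.u i) ∈ P ∧ (WMarker.u i, WMarker.v i) ∈ P) := by
    rintro ⟨h1, h2⟩
    refine conflict_between (rank := rP) hLP (hPc _ h1).2 (hPc _ h2).2
      (w := .e (occ i 2).1 (occ i 2).2) ?_ ?_ (by simp)
    · rw [hre3]; simp [hrP, rankPi]
    · rw [hre3]; simp [hrP, rankPi]

  -- candidate list
  have hchain : consecPairs (chain n m i) =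
      [(WMarker.p i, WMarker.q i), (WMarker.q i, WMarker.r i), (WMarker.r i, WMarker.s i),
       (WMarker.s i, WMarker.t i), (WMarker.t i, WMarker.u i), (WMarker.u i, WMarker.v i)] := rfl
  set S : List (WMarker n m × WMarker n m) :=
    [(WMarker.ap i, WMarker.bp i), (WMarker.am i, WMarker.bm i),
     (WMarker.p i, WMarker.q i), (WMarker.q i, WMarker.r i), (WMarker.r i, WMarker.s i),
     (WMarker.s i, WMarker.t i), (WMarker.t i, WMarker.u i), (WMarker.u i, WMarker.v i)]
    with hSdef
  have hSmem : ∀ ab : WMarker n m × WMarker n m,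
      (ab ∈ abPairs n m i ∨ ab ∈ consecPairs (chain n m i)) ↔ ab ∈ S := by
    intro ab
    rw [hchain, hSdef]
    simp only [abPairs, List.mem_cons, List.not_mem_nil, or_false, or_assoc]
  set F := P.filter
      (fun ab => ab ∈ abPairs n m i ∨ ab ∈ consecPairs (chain n m i)) with hFdef
  have hFmem : ∀ ab, ab ∈ F ↔ ab ∈ S ∧ ab ∈ P := by
    intro ab
    rw [hFdef]
    simp only [List.mem_filter, decide_eq_true_eq]
    rw [hSmem ab]
    exact and_comm
  have hFnd : F.Nodup := by
    rw [hFdef, hPdef]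
    exact ((consecPairs_nodup hLG.1).filter _).filter _
  have hSnd : S.Nodup := by rw [hSdef]; simp
  set T := S.filter (fun ab => ab ∈ P) with hTdef
  have hTnd : T.Nodup := hSnd.filter _
  have hperm : F.Perm T := by
    refine (List.perm_ext_iff_of_nodup hFnd hTnd).2 (fun ab => ?_)
    rw [hFmem ab, hTdef]
    simp only [List.mem_filter, decide_eq_true_eq]
  have hlenFT : F.length = T.length := hperm.length_eq
  have hTlen : T.length =
      cond (decide ((WMarker.ap i, WMarker.bp i) ∈ P)) 1 0 +
      (cond (decide ((WMarker.am i, WMarker.bm i) ∈ P)) 1 0 +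
      (cond (decide ((WMarker.p i, WMarker.q i) ∈ P)) 1 0 +
      (cond (decide ((WMarker.q i, WMarker.r i) ∈ P)) 1 0 +
      (cond (decide ((WMarker.r i, WMarker.s i) ∈ P)) 1 0 +
      (cond (decide ((WMarker.s i, WMarker.t i) ∈ P)) 1 0 +
      (cond (decide ((WMarker.t i, WMarker.u i) ∈ P)) 1 0 +
      (cond (decide ((WMarker.u i, WMarker.v i) ∈ P)) 1 0 + 0))))))) := by
    rw [hTdef, hSdef]
    simp only [filter_length_cons, List.filter_nil, List.length_nil]
  have hcore := core_bool
    (decide ((WMarker.ap i, WMarker.bp i) ∈ P)) (decide ((WMarker.am i, WMarker.bm i) ∈ P))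
    (decide ((WMarker.p i, WMarker.q i) ∈ P)) (decide ((WMarker.q i, WMarker.r i) ∈ P))
    (decide ((WMarker.r i, WMarker.s i) ∈ P)) (decide ((WMarker.s i, WMarker.t i) ∈ P))
    (decide ((WMarker.t i, WMarker.u i) ∈ P)) (decide ((WMarker.u i, WMarker.v i) ∈ P))
    (by simpa using c_ab) (by simpa using c_ab_pq) (by simpa using c_ab_uv)
    (by simpa using c_pq_qr) (by simpa using c_qr_rs) (by simpa using c_rs_st)
    (by simpa using c_st_tu) (by simpa using c_tu_uv)
  constructor
  · rw [hlenFT, hTlen]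
    exact hcore.1
  · intro h4
    have h4' := hcore.2 (by rw [← hTlen, ← hlenFT]; exact h4)
    rcases h4' with ⟨e1, e2, e3, e4, e5, e6, e7, e8⟩ | ⟨e1, e2, e3, e4, e5, e6, e7, e8⟩
    · left
      intro ab
      rw [hFmem ab]
      constructor
      · rintro ⟨hS, hP⟩
        rw [hSdef] at hS
        simp only [List.mem_cons, List.not_mem_nil, or_false] at hS
        rcases hS with rfl | rfl | rfl | rfl | rfl | rfl | rfl | rfl
        · simp
        · exact absurd hP (of_decide_eq_false e2)
        · exact absurd hP (of_decide_eq_false e3)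
        · simp
        · exact absurd hP (of_decide_eq_false e5)
        · simp
        · exact absurd hP (of_decide_eq_false e7)
        · simp
      · intro hS
        simp only [List.mem_cons, List.not_mem_nil, or_false] at hS
        rcases hS with rfl | rfl | rfl | rfl
        · exact ⟨by rw [hSdef]; simp, of_decide_eq_true e1⟩
        · exact ⟨by rw [hSdef]; simp, of_decide_eq_true e4⟩
        · exact ⟨by rw [hSdef]; simp, of_decide_eq_true e6⟩
        · exact ⟨by rw [hSdef]; simp, of_decide_eq_true e8⟩
    · right
      intro ab
      rw [hFmem ab]
      constructor
      · rintro ⟨hS, hP⟩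
        rw [hSdef] at hS
        simp only [List.mem_cons, List.not_mem_nil, or_false] at hS
        rcases hS with rfl | rfl | rfl | rfl | rfl | rfl | rfl | rfl
        · exact absurd hP (of_decide_eq_false e1)
        · simp
        · simp
        · exact absurd hP (of_decide_eq_false e4)
        · simp
        · exact absurd hP (of_decide_eq_false e6)
        · simp
        · exact absurd hP (of_decide_eq_false e8)
      · intro hS
        simp only [List.mem_cons, List.not_mem_nil, or_false] at hS
        rcases hS with rfl | rfl | rfl | rfl
        · exact ⟨by rw [hSdef]; simp, of_decide_eq_true e3⟩
        · exact ⟨by rw [hSdef]; simp, of_decide_eq_true e5⟩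
        · exact ⟨by rw [hSdef]; simp, of_decide_eq_true e7⟩
        · exact ⟨by rw [hSdef]; simp, of_decide_eq_true e2⟩
end

section
/- Let Γ be a linear order on a finite set Σ and let Π be a weak order on Σ with buckets Σ_1, …, Σ_k. Partition each bucket Σ_h into maximal blocks of markers that appear as a contiguous substring of Γ. Then there exists a linear extension Π' of Π maximizing the number of adjacencies with Γ in which, for every block, the markers of the block appear consecutively in Π' in the same order as the corresponding substring of Γ. -/
/-- `w` is a block of the bucket `h` (of the weak order with bucket function `ρ`) with respect
to the permutation `Γ`: `w` is a nonempty maximal contiguous substring of `Γ` all of whose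
markers lie in bucket `h`. (Such blocks partition each bucket into maximal sets of markers
appearing as contiguous substrings of `Γ`.) -/
def IsBlock {α : Type*} {k : ℕ} (Γ : List α) (ρ : α → Fin k) (h : Fin k) (w : List α) : Prop :=
  w ≠ [] ∧ w <:+: Γ ∧ (∀ x ∈ w, ρ x = h) ∧
  (∀ a : α, (a :: w) <:+: Γ → ρ a ≠ h) ∧
  (∀ a : α, (w ++ [a]) <:+: Γ → ρ a ≠ h)

namespace AdjProof
open List
set_option linter.unusedSectionVars false

variable {α : Type*} [DecidableEq α] {k : ℕ}

@[simp] lemma cp_nil : consecPairs ([] : List α) = [] := rfl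
@[simp] lemma cp_single (a : α) : consecPairs [a] = [] := rfl
@[simp] lemma cp_cons_cons (a b : α) (l : List α) :
    consecPairs (a :: b :: l) = (a, b) :: consecPairs (b :: l) := rfl

lemma cp_subset_cons (a : α) (l : List α) : consecPairs l ⊆ consecPairs (a :: l) := by
  cases l with
  | nil => simp
  | cons b t => rw [cp_cons_cons]; exact List.subset_cons_self _ _

lemma cp_subset_append_left (s l : List α) : consecPairs l ⊆ consecPairs (s ++ l) := by
  induction s with
  | nil => simp
  | cons a s ih => exact fun x hx => cp_subset_cons a _ (ih hx)

lemma cp_subset_append_right (t : List α) : ∀ (w : List α), consecPairs w ⊆ consecPairs (w ++ t)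
  | [] => by simp
  | [a] => by simp
  | a :: b :: r => by
    rw [cp_cons_cons, cons_append, cons_append, cp_cons_cons]
    exact List.cons_subset_cons _ (cp_subset_append_right t (b :: r))

lemma cp_subset_of_infix {w l : List α} (h : w <:+: l) : consecPairs w ⊆ consecPairs l := by
  obtain ⟨s, t, rfl⟩ := h
  rw [List.append_assoc]
  exact fun x hx => cp_subset_append_left s _ (cp_subset_append_right t w hx)

lemma mem_cp_of_split {x y : α} {u v : List α} : (x, y) ∈ consecPairs (u ++ x :: y :: v) := by
  apply cp_subset_append_left
  simp

lemma split_of_mem_cp {x y : α} : ∀ {l : List α}, (x, y) ∈ consecPairs l →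
    ∃ u v, l = u ++ x :: y :: v
  | [], h => by simp at h
  | [a], h => by simp at h
  | a :: b :: t, h => by
    rw [cp_cons_cons, List.mem_cons] at h
    rcases h with h | h
    · exact ⟨[], t, by simp [Prod.ext_iff] at h; simp [h.1, h.2]⟩
    · obtain ⟨u, v, huv⟩ := split_of_mem_cp h
      exact ⟨a :: u, v, by simp [huv]⟩

lemma mem_cp_iff {x y : α} {l : List α} :
    (x, y) ∈ consecPairs l ↔ ∃ u v, l = u ++ x :: y :: v :=
  ⟨split_of_mem_cp, fun ⟨u, v, h⟩ => h ▸ mem_cp_of_split⟩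

lemma cp_map_fst : ∀ (l : List α), (consecPairs l).map Prod.fst = l.dropLast
  | [] => rfl
  | [a] => rfl
  | a :: b :: t => by
    rw [cp_cons_cons, List.map_cons, cp_map_fst (b :: t)]
    simp

lemma cp_nodup {l : List α} (h : l.Nodup) : (consecPairs l).Nodup := by
  apply List.Nodup.of_map Prod.fst
  rw [cp_map_fst]
  exact h.sublist (List.dropLast_sublist l)

/-- decomposition of consecutive pairs of an append -/
lemma cp_append_cases {x y : α} : ∀ {c d : List α}, (x, y) ∈ consecPairs (c ++ d) →
    (x, y) ∈ consecPairs c ∨ (x, y) ∈ consecPairs d ∨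
      (c.getLast? = some x ∧ d.head? = some y)
  | [], d, h => Or.inr (Or.inl h)
  | [a], d, h => by
    cases d with
    | nil => simp at h
    | cons b t =>
      simp only [List.singleton_append, cp_cons_cons, List.mem_cons] at h
      rcases h with h | h
      · obtain ⟨rfl, rfl⟩ := Prod.mk.injEq .. ▸ h
        exact Or.inr (Or.inr ⟨rfl, rfl⟩)
      · exact Or.inr (Or.inl h)
  | a :: b :: c', d, h => by
    rw [List.cons_append, List.cons_append, cp_cons_cons] at h
    rcases List.mem_cons.1 h with h | h
    · left; rw [cp_cons_cons]; exact List.mem_cons.2 (Or.inl h)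
    · rcases cp_append_cases (c := b :: c') (by rw [List.cons_append]; exact h) with h | h | h
      · left; exact cp_subset_cons a _ h
      · exact Or.inr (Or.inl h)
      · exact Or.inr (Or.inr ⟨by rw [List.getLast?_cons_cons]; exact h.1, h.2⟩)


/-! ### chunks -/

def chunks (ρ : α → Fin k) : List α → List (List α)
  | [] => []
  | a :: l =>
    (a :: l.takeWhile (fun x => decide (ρ x = ρ a))) ::
      chunks ρ (l.dropWhile (fun x => decide (ρ x = ρ a)))
  termination_by l => l.length
  decreasing_by
    simp only [List.length_cons]
    exact Nat.lt_succ_of_le ((List.dropWhile_sublist _).length_le)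

@[simp] lemma chunks_nil (ρ : α → Fin k) : chunks ρ ([] : List α) = [] := by rw [chunks]

lemma chunks_cons (ρ : α → Fin k) (a : α) (l : List α) :
    chunks ρ (a :: l) =
      (a :: l.takeWhile (fun x => decide (ρ x = ρ a))) ::
        chunks ρ (l.dropWhile (fun x => decide (ρ x = ρ a))) := by rw [chunks]

lemma flatten_chunks (ρ : α → Fin k) (l : List α) : (chunks ρ l).flatten = l := by
  induction l using chunks.induct ρ with
  | case1 => simp
  | case2 a l ih =>
    rw [chunks_cons, List.flatten_cons, ih, List.cons_append,
      List.takeWhile_append_dropWhile]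

lemma chunks_ne_nil (ρ : α → Fin k) (l : List α) : ∀ c ∈ chunks ρ l, c ≠ [] := by
  induction l using chunks.induct ρ with
  | case1 => simp
  | case2 a l ih =>
    rw [chunks_cons]
    rintro c hc
    rcases List.mem_cons.1 hc with rfl | hc
    · simp
    · exact ih c hc

lemma chunks_const (ρ : α → Fin k) (l : List α) :
    ∀ c ∈ chunks ρ l, ∀ x ∈ c, ∀ y ∈ c, ρ x = ρ y := by
  induction l using chunks.induct ρ with
  | case1 => simp
  | case2 a l ih =>
    rw [chunks_cons]
    rintro c hc
    rcases List.mem_cons.1 hc with rfl | hc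
    · intro x hx y hy
      have key : ∀ z ∈ a :: l.takeWhile (fun x => decide (ρ x = ρ a)), ρ z = ρ a := by
        rintro z hz
        rcases List.mem_cons.1 hz with rfl | hz
        · rfl
        · exact of_decide_eq_true (List.mem_takeWhile_imp (p := fun x => decide (ρ x = ρ a)) hz)
      rw [key x hx, key y hy]
    · exact ih c hc

lemma chunks_block_cons (ρ : α → Fin k) {w t : List α} (hw : w ≠ [])
    (hconst : ∀ x ∈ w, ∀ y ∈ w, ρ x = ρ y)
    (hbd : ∀ b, t.head? = some b → ∀ x ∈ w, ρ b ≠ ρ x) :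
    chunks ρ (w ++ t) = w :: chunks ρ t := by
  obtain ⟨a, w', rfl⟩ := List.exists_cons_of_ne_nil hw
  set p : α → Bool := fun x => decide (ρ x = ρ a) with hp
  have hpos : ∀ x ∈ w', p x := by
    intro x hx
    exact decide_eq_true (hconst x (List.mem_cons_of_mem _ hx) a (List.mem_cons_self))
  have htw : t.takeWhile p = [] := by
    cases t with
    | nil => simp
    | cons b t' =>
      apply List.takeWhile_cons_of_neg
      simp only [hp, decide_eq_true_eq]
      exact hbd b rfl a (List.mem_cons_self)
  have hdw : t.dropWhile p = t := by
    cases t with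
    | nil => simp
    | cons b t' =>
      apply List.dropWhile_cons_of_neg
      simp only [hp, decide_eq_true_eq]
      exact hbd b rfl a (List.mem_cons_self)
  rw [List.cons_append, chunks_cons, List.takeWhile_append_of_pos hpos,
    List.dropWhile_append_of_pos hpos, htw, hdw, List.append_nil]

lemma chunks_append (ρ : α → Fin k) : ∀ (n : ℕ) (s t : List α), s.length ≤ n → s ≠ [] → t ≠ [] →
    (∀ x y, s.getLast? = some x → t.head? = some y → ρ x ≠ ρ y) →
    chunks ρ (s ++ t) = chunks ρ s ++ chunks ρ t := by
  intro n
  induction n with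
  | zero =>
    intro s t hlen hs
    rw [Nat.le_zero, List.length_eq_zero_iff] at hlen
    exact absurd hlen hs
  | succ n ih =>
    rintro s t hlen hs ht hbd
    obtain ⟨a, s', rfl⟩ := List.exists_cons_of_ne_nil hs
    set p : α → Bool := fun x => decide (ρ x = ρ a) with hp
    obtain ⟨b, t', rfl⟩ := List.exists_cons_of_ne_nil ht
    by_cases hall : ∀ x ∈ s', p x
    · -- all of s' in the same chunk as a
      have hlast : ρ ((a :: s').getLast (by simp)) = ρ a := by
        have := List.getLast_mem (l := a :: s') (by simp)
        rcases List.mem_cons.1 this with h | h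
        · rw [h]
        · exact of_decide_eq_true (hall _ h)
      have hbab : ¬ p b := by
        simp only [hp, decide_eq_true_eq]
        intro hcontra
        exact hbd _ b (List.getLast?_eq_getLast (by simp)) rfl (hlast.trans hcontra.symm)
      have htw : (b :: t').takeWhile p = [] := List.takeWhile_cons_of_neg hbab
      have hdw : (b :: t').dropWhile p = b :: t' := List.dropWhile_cons_of_neg hbab
      rw [List.cons_append, chunks_cons, chunks_cons,
        List.takeWhile_append_of_pos hall, List.dropWhile_append_of_pos hall, htw, hdw,
        List.takeWhile_eq_self_iff.2 hall, List.dropWhile_eq_nil_iff.2 hall,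
        List.append_nil, chunks_nil]
      rfl
    · -- the chunk of a ends inside s'
      push_neg at hall
      have hdne : s'.dropWhile p ≠ [] := by
        rw [Ne, List.dropWhile_eq_nil_iff]
        push_neg
        exact hall
      have htwne : s'.takeWhile p ≠ s' := by
        intro hcontra
        obtain ⟨x, hx, hpx⟩ := hall
        exact hpx (List.takeWhile_eq_self_iff.1 hcontra x hx)
      have htw : (s' ++ b :: t').takeWhile p = s'.takeWhile p := by
        rw [List.takeWhile_append, if_neg]
        intro hcontra
        exact htwne ((List.takeWhile_prefix p).eq_of_length hcontra)
      have hdw : (s' ++ b :: t').dropWhile p = s'.dropWhile p ++ b :: t' := by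
        rw [List.dropWhile_append, if_neg]
        simp [hdne]
      have hlast' : (s'.dropWhile p).getLast? = (a :: s').getLast? := by
        have hsuf : s'.dropWhile p <:+ s' := List.dropWhile_suffix p
        obtain ⟨u, hu⟩ := hsuf
        have h1 : s'.getLast? = (s'.dropWhile p).getLast? := by
          conv_lhs => rw [← hu]
          rw [List.getLast?_append]
          cases hd : (s'.dropWhile p).getLast? with
          | none => exact absurd (List.getLast?_eq_none_iff.1 hd) hdne
          | some z => simp
        have h2 : (a :: s').getLast? = s'.getLast? := by
          have hs'ne : s' ≠ [] := by
            rintro rfl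
            simp at hdne
          rw [show a :: s' = [a] ++ s' by rfl, List.getLast?_append]
          cases hd : s'.getLast? with
          | none => exact absurd (List.getLast?_eq_none_iff.1 hd) hs'ne
          | some z => simp
        rw [h2, h1]
      have hrec := ih (s'.dropWhile p) (b :: t')
        (le_trans ((List.dropWhile_sublist p).length_le) (by simpa using hlen))
        hdne (by simp)
        (by intro x y hx hy; exact hbd x y (hlast' ▸ hx) hy)
      rw [List.cons_append, chunks_cons, chunks_cons, htw, hdw, hrec]
      rfl


lemma mem_cp_chunk_of_same (ρ : α → Fin k) (l : List α) :
    ∀ x y : α, (x, y) ∈ consecPairs l → ρ x = ρ y →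
      ∃ c ∈ chunks ρ l, (x, y) ∈ consecPairs c := by
  induction l using chunks.induct ρ with
  | case1 => intro x y hm; simp at hm
  | case2 a l ih =>
    intro x y hm hρ
    set p : α → Bool := fun x => decide (ρ x = ρ a) with hp
    have hsplit : a :: l = (a :: l.takeWhile p) ++ l.dropWhile p := by
      rw [List.cons_append, List.takeWhile_append_dropWhile]
    rw [hsplit] at hm
    rcases cp_append_cases hm with hc | hc | hc
    · exact ⟨a :: l.takeWhile p, by rw [chunks_cons]; exact List.mem_cons_self, hc⟩
    · obtain ⟨c, hc1, hc2⟩ := ih x y hc hρ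
      exact ⟨c, by rw [chunks_cons]; exact List.mem_cons_of_mem _ hc1, hc2⟩
    · exfalso
      obtain ⟨hx, hy⟩ := hc
      have hxmem : x ∈ a :: l.takeWhile p := by
        obtain ⟨ys, hys⟩ := List.getLast?_eq_some_iff.1 hx
        rw [hys]; simp
      have hρx : ρ x = ρ a := by
        rcases List.mem_cons.1 hxmem with rfl | hxm
        · rfl
        · exact of_decide_eq_true (List.mem_takeWhile_imp (p := p) hxm)
      have hdne : l.dropWhile p ≠ [] := by
        intro hcon; rw [hcon] at hy; simp at hy
      have hyhead : (l.dropWhile p).head hdne = y := by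
        rw [← Option.some_inj, ← List.head?_eq_head, hy]
      have := List.head_dropWhile_not p hdne
      rw [hyhead] at this
      simp only [hp, decide_eq_false_iff_not] at this
      exact this (by rw [← hρ, hρx])

lemma block_mem_chunks {Γ : List α} {ρ : α → Fin k} {h : Fin k} {w : List α}
    (hb : IsBlock Γ ρ h w) : w ∈ chunks ρ Γ := by
  obtain ⟨hne, ⟨s, t, rfl⟩, hconst, hleft, hright⟩ := hb
  have hconst' : ∀ x ∈ w, ∀ y ∈ w, ρ x = ρ y := fun x hx y hy => by
    rw [hconst x hx, hconst y hy]
  have hbd_right : ∀ b, t.head? = some b → ∀ x ∈ w, ρ b ≠ ρ x := by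
    intro b hb x hx
    obtain ⟨t', rfl⟩ : ∃ t', t = b :: t' := by
      cases t with
      | nil => simp at hb
      | cons c t' => exact ⟨t', by simp at hb; rw [hb]⟩
    rw [hconst x hx]
    exact hright b ⟨s, t', by simp⟩
  have hwt : chunks ρ (w ++ t) = w :: chunks ρ t := chunks_block_cons ρ hne hconst' hbd_right
  rcases eq_or_ne s [] with rfl | hsne
  · rw [List.nil_append, hwt]; exact List.mem_cons_self
  · have hbd_left : ∀ x y, s.getLast? = some x → (w ++ t).head? = some y → ρ x ≠ ρ y := by
      intro x y hx hy
      obtain ⟨ys, hys⟩ := List.getLast?_eq_some_iff.1 hx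
      have hymem : y ∈ w := by
        obtain ⟨b, w', rfl⟩ := List.exists_cons_of_ne_nil hne
        simp at hy
        rw [hy]; exact List.mem_cons_self
      rw [hconst y hymem]
      apply hleft
      exact ⟨ys, t, by rw [hys]; simp⟩
    have := chunks_append ρ s.length s (w ++ t) le_rfl hsne
      (by obtain ⟨b, w', rfl⟩ := List.exists_cons_of_ne_nil hne; simp) hbd_left
    rw [List.append_assoc, this, hwt]
    exact List.mem_append_right _ (List.mem_cons_self)

lemma nodup_of_disjoint {M : List (List α)} (hne : ∀ c ∈ M, c ≠ [])
    (hdisj : M.Pairwise List.Disjoint) : M.Nodup := by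
  induction M with
  | nil => simp
  | cons c M ih =>
    rw [List.nodup_cons]
    refine ⟨?_, ih (fun d hd => hne d (List.mem_cons_of_mem _ hd)) (List.pairwise_cons.1 hdisj).2⟩
    intro hmem
    have := (List.pairwise_cons.1 hdisj).1 c hmem
    obtain ⟨a, c', rfl⟩ := List.exists_cons_of_ne_nil (hne c (List.mem_cons_self))
    exact this (List.mem_cons_self) (List.mem_cons_self)

/-! ### sublist and index helpers -/

lemma idxOf_split {L u v : List α} {a : α} (hn : L.Nodup) (hL : L = u ++ a :: v) :
    L.idxOf a = u.length := by
  subst hL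
  have ha : a ∉ u := by
    rw [List.nodup_append] at hn
    exact fun hmem => hn.2.2 a hmem a List.mem_cons_self rfl
  rw [List.idxOf_append_of_notMem ha]
  simp

lemma nodup_split_unique {L u v u' v' : List α} {a : α} (hn : L.Nodup)
    (h1 : L = u ++ a :: v) (h2 : L = u' ++ a :: v') : u = u' ∧ v = v' := by
  have hlen : u.length = u'.length := by
    rw [← idxOf_split hn h1, ← idxOf_split hn h2]
  have := List.append_inj (h1 ▸ h2 : u ++ a :: v = u' ++ a :: v') hlen
  exact ⟨this.1, by simpa using this.2⟩

lemma split_of_sublist_pair {x y : α} : ∀ {L : List α}, [x, y] <+ L →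
    ∃ u v w, L = u ++ x :: (v ++ y :: w)
  | [], h => by simp at h
  | a :: L', h => by
    cases h with
    | cons _ h' =>
      obtain ⟨u, v, w, huvw⟩ := split_of_sublist_pair h'
      exact ⟨a :: u, v, w, by rw [huvw]; simp⟩
    | cons_cons _ h' =>
      have hy : y ∈ L' := by
        have := h'.subset; simp at this; exact this
      obtain ⟨s, t, hst⟩ := List.append_of_mem hy
      exact ⟨[], s, t, by rw [hst]; simp⟩

lemma sublist_pair_of_split {x y : α} {L u v w : List α} (hL : L = u ++ x :: (v ++ y :: w)) :
    [x, y] <+ L := by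
  subst hL
  have h1 : [x] ++ [y] <+ (x :: v) ++ (y :: w) :=
    List.Sublist.append (by simp) (by simp)
  have h2 : x :: (v ++ y :: w) = (x :: v) ++ (y :: w) := by simp
  rw [h2]
  exact h1.trans (List.sublist_append_right u _)

lemma idxOf_lt_of_split {L u v w : List α} {x y : α} (hn : L.Nodup)
    (hL : L = u ++ x :: (v ++ y :: w)) : L.idxOf x < L.idxOf y := by
  have h1 : L.idxOf x = u.length := idxOf_split hn hL
  have h2 : L.idxOf y = (u ++ x :: v).length :=
    idxOf_split (u := u ++ x :: v) (v := w) hn (by rw [hL]; simp)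
  rw [h1, h2]
  simp only [List.length_append, List.length_cons]
  omega

lemma not_sublist_pair_both {L : List α} {x y : α} (hn : L.Nodup)
    (h1 : [x, y] <+ L) (h2 : [y, x] <+ L) : False := by
  obtain ⟨u, v, w, hs⟩ := split_of_sublist_pair h1
  obtain ⟨u', v', w', hs'⟩ := split_of_sublist_pair h2
  have := idxOf_lt_of_split hn hs
  have := idxOf_lt_of_split hn hs'
  omega

lemma infix_of_chain {L : List α} (hn : L.Nodup) :
    ∀ (e : List α), e ≠ [] → (∀ x ∈ e, x ∈ L) →
    (∀ p ∈ consecPairs e, p ∈ consecPairs L) → e <:+: L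
  | [], h, _, _ => absurd rfl h
  | [x], _, hmem, _ => by
    obtain ⟨s, t, hst⟩ := List.append_of_mem (hmem x (List.mem_cons_self))
    exact ⟨s, t, by rw [hst]; simp⟩
  | x :: y :: r, _, hmem, hcp => by
    obtain ⟨s, t, hst⟩ := infix_of_chain hn (y :: r) (by simp)
      (fun z hz => hmem z (List.mem_cons_of_mem _ hz))
      (fun p hp => hcp p (cp_subset_cons x _ hp))
    obtain ⟨u, v, huv⟩ := split_of_mem_cp (hcp (x, y) (by simp))
    have h1 : L = s ++ y :: (r ++ t) := by rw [← hst]; simp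
    have h2 : L = (u ++ [x]) ++ y :: v := by rw [huv]; simp
    obtain ⟨he, hv⟩ := nodup_split_unique hn h1 h2
    refine ⟨u, t, ?_⟩
    rw [← hst, he]
    simp


/-! ### helpers for positions -/

lemma mem_left_sublist {z x : α} {u rest : List α} (hz : z ∈ u) :
    [z, x] <+ u ++ x :: rest := by
  obtain ⟨s, t, rfl⟩ := List.append_of_mem hz
  exact sublist_pair_of_split (u := s) (v := t) (w := rest) (by simp)

lemma mem_right_sublist {z x : α} {u rest : List α} (hz : z ∈ rest) :
    [x, z] <+ u ++ x :: rest := by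
  obtain ⟨s, t, rfl⟩ := List.append_of_mem hz
  exact sublist_pair_of_split (u := u) (v := s) (w := t) rfl

lemma idxOf_lt_of_mem_left {L s rest : List α} {z : α} (hn : L.Nodup)
    (hL : L = s ++ rest) (hz : z ∈ s) : L.idxOf z < s.length := by
  obtain ⟨s1, s2, rfl⟩ := List.append_of_mem hz
  have : L.idxOf z = s1.length :=
    idxOf_split (u := s1) (v := s2 ++ rest) hn (by rw [hL]; simp)
  rw [this]
  simp

lemma mem_split_pair {β : Type*} {M : List β} {c d : β} (hc : c ∈ M) (hd : d ∈ M)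
    (hne : c ≠ d) :
    (∃ M1 M2, M = M1 ++ c :: M2 ∧ d ∈ M2) ∨ (∃ M1 M2, M = M1 ++ d :: M2 ∧ c ∈ M2) := by
  induction M with
  | nil => simp at hc
  | cons a M ih =>
    rcases List.mem_cons.1 hc with rfl | hc'
    · left
      exact ⟨[], M, by simp, by rcases List.mem_cons.1 hd with rfl | h; exact absurd rfl hne; exact h⟩
    · rcases List.mem_cons.1 hd with rfl | hd'
      · right
        exact ⟨[], M, by simp, hc'⟩
      · rcases ih hc' hd' with ⟨M1, M2, h1, h2⟩ | ⟨M1, M2, h1, h2⟩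
        · exact Or.inl ⟨a :: M1, M2, by rw [h1]; simp, h2⟩
        · exact Or.inr ⟨a :: M1, M2, by rw [h1]; simp, h2⟩

lemma infix_flatten_of_mem {c : List α} {M : List (List α)} (hc : c ∈ M) :
    c <:+: M.flatten := by
  obtain ⟨s, t, rfl⟩ := List.append_of_mem hc
  exact ⟨s.flatten, t.flatten, by simp⟩

lemma consec_in_sorted {β : Type*} (κf : β → ℕ) : ∀ (M : List β), M.Nodup →
    M.Pairwise (fun c d => κf c ≤ κf d) → ∀ {c d : β}, c ∈ M → d ∈ M → κf c < κf d →
    (∀ e ∈ M, e ≠ c → e ≠ d → κf e < κf c ∨ κf d < κf e) →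
    ∃ M1 M2, M = M1 ++ c :: d :: M2 := by
  intro M
  induction M with
  | nil => intro _ _ c d hc; simp at hc
  | cons e M ih =>
    intro hnd hpw c d hc hd hlt hdich
    have hcd : c ≠ d := fun h => by rw [h] at hlt; omega
    rcases List.mem_cons.1 hc with rfl | hc'
    · -- head is c; show head of M is d
      have hd' : d ∈ M := by
        rcases List.mem_cons.1 hd with rfl | h
        · exact absurd rfl hcd.symm
        · exact h
      obtain ⟨e', M', rfl⟩ := List.exists_cons_of_ne_nil (List.ne_nil_of_mem hd')
      have he'c : e' ≠ c := by
        rintro rfl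
        exact (List.nodup_cons.1 hnd).1 (List.mem_cons_self)
      by_cases he'd : e' = d
      · exact ⟨[], M', by simp [he'd]⟩
      · exfalso
        have h1 : κf c ≤ κf e' := (List.pairwise_cons.1 hpw).1 e' (List.mem_cons_self)
        rcases hdich e' (List.mem_cons_of_mem _ (List.mem_cons_self)) he'c he'd with h | h
        · omega
        · have hdM' : d ∈ M' := by
            rcases List.mem_cons.1 hd' with rfl | hh
            · exact absurd rfl he'd
            · exact hh
          have : κf e' ≤ κf d :=
            (List.pairwise_cons.1 (List.pairwise_cons.1 hpw).2).1 d hdM'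
          omega
    · have hed : e ≠ d := by
        rintro rfl
        have : κf e ≤ κf c := (List.pairwise_cons.1 hpw).1 c hc'
        omega
      have hd' : d ∈ M := by
        rcases List.mem_cons.1 hd with rfl | h
        · exact absurd rfl hed
        · exact h
      have hec : e ≠ c := by
        rintro rfl
        exact (List.nodup_cons.1 hnd).1 hc'
      obtain ⟨M1, M2, hM⟩ := ih (List.nodup_cons.1 hnd).2 (List.pairwise_cons.1 hpw).2
        hc' hd' hlt
        (fun x hx h1 h2 => hdich x (List.mem_cons_of_mem _ hx) h1 h2)
      exact ⟨e :: M1, M2, by rw [hM]; simp⟩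

/-! ### the construction T -/

def kval (ρ : α → Fin k) (L : List α) (c : List α) : ℕ :=
  match c with
  | [] => 0
  | x :: _ => (ρ x : ℕ) * (L.length + 1) + L.idxOf x

@[simp] lemma kval_cons (ρ : α → Fin k) (L : List α) (x : α) (c : List α) :
    kval ρ L (x :: c) = (ρ x : ℕ) * (L.length + 1) + L.idxOf x := rfl

def sortedChunks (ρ : α → Fin k) (Γ L : List α) : List (List α) :=
  (chunks ρ Γ).insertionSort (fun c d => kval ρ L c ≤ kval ρ L d)

def T (ρ : α → Fin k) (Γ L : List α) : List α := (sortedChunks ρ Γ L).flatten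

lemma sortedChunks_perm (ρ : α → Fin k) (Γ L : List α) :
    sortedChunks ρ Γ L ~ chunks ρ Γ :=
  List.perm_insertionSort _ _

lemma sortedChunks_sorted (ρ : α → Fin k) (Γ L : List α) :
    (sortedChunks ρ Γ L).Pairwise (fun c d => kval ρ L c ≤ kval ρ L d) := by
  haveI : IsTotal (List α) (fun c d => kval ρ L c ≤ kval ρ L d) :=
    ⟨fun a b => le_total _ _⟩
  haveI : IsTrans (List α) (fun c d => kval ρ L c ≤ kval ρ L d) :=
    ⟨fun a b c => le_trans⟩
  exact List.pairwise_insertionSort _ _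

lemma T_perm (ρ : α → Fin k) (Γ L : List α) : T ρ Γ L ~ Γ := by
  have := (sortedChunks_perm ρ Γ L).flatten
  rwa [flatten_chunks] at this

lemma chunk_infix_T {ρ : α → Fin k} {Γ L c : List α} (hc : c ∈ chunks ρ Γ) :
    c <:+: T ρ Γ L :=
  infix_flatten_of_mem (((sortedChunks_perm ρ Γ L).mem_iff).2 hc)

lemma kval_lt_of_bucket_lt {ρ : α → Fin k} {L : List α} {x y : α} {c d : List α}
    (hx : L.idxOf x ≤ L.length) (hρ : ρ x < ρ y) :
    kval ρ L (x :: c) < kval ρ L (y :: d) := by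
  rw [kval_cons, kval_cons]
  have h1 : ((ρ x : ℕ) + 1) * (L.length + 1) ≤ (ρ y : ℕ) * (L.length + 1) :=
    Nat.mul_le_mul_right _ hρ
  nlinarith [Nat.zero_le (L.idxOf y)]

lemma isLin_T (ρ : α → Fin k) (Γ L : List α) (hΓn : Γ.Nodup) (hΓc : ∀ x, x ∈ Γ) :
    IsLinearization (fun a b => ρ a < ρ b) (T ρ Γ L) := by
  refine ⟨(T_perm ρ Γ L).nodup_iff.2 hΓn, fun x => (T_perm ρ Γ L).mem_iff.2 (hΓc x), ?_⟩
  intro a b hab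
  have ha : a ∈ T ρ Γ L := (T_perm ρ Γ L).mem_iff.2 (hΓc a)
  have hb : b ∈ T ρ Γ L := (T_perm ρ Γ L).mem_iff.2 (hΓc b)
  obtain ⟨ca, hcaM, haca⟩ := List.mem_flatten.1 ha
  obtain ⟨cb, hcbM, hbcb⟩ := List.mem_flatten.1 hb
  have hcaC : ca ∈ chunks ρ Γ := (sortedChunks_perm ρ Γ L).mem_iff.1 hcaM
  have hcbC : cb ∈ chunks ρ Γ := (sortedChunks_perm ρ Γ L).mem_iff.1 hcbM
  obtain ⟨xa, ca', rfl⟩ := List.exists_cons_of_ne_nil (chunks_ne_nil ρ Γ _ hcaC)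
  obtain ⟨xb, cb', rfl⟩ := List.exists_cons_of_ne_nil (chunks_ne_nil ρ Γ _ hcbC)
  have hρa : ρ xa = ρ a := chunks_const ρ Γ _ hcaC xa (List.mem_cons_self) a haca
  have hρb : ρ xb = ρ b := chunks_const ρ Γ _ hcbC xb (List.mem_cons_self) b hbcb
  have hklt : kval ρ L (xa :: ca') < kval ρ L (xb :: cb') :=
    kval_lt_of_bucket_lt List.idxOf_le_length (by rw [hρa, hρb]; exact hab)
  have hne : (xa :: ca') ≠ (xb :: cb') := by
    intro h
    rw [h] at hklt
    omega
  rcases mem_split_pair hcaM hcbM hne with ⟨M1, M2, hM, hmem⟩ | ⟨M1, M2, hM, hmem⟩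
  · have hb2 : b ∈ M2.flatten := List.mem_flatten.2 ⟨_, hmem, hbcb⟩
    have h1 : [a] ++ [b] <+ (xa :: ca') ++ M2.flatten :=
      List.Sublist.append (List.singleton_sublist.2 haca) (List.singleton_sublist.2 hb2)
    have h2 : [a, b] <+ (xa :: ca') ++ M2.flatten := h1
    have h3 : (xa :: ca') ++ M2.flatten <+ T ρ Γ L := by
      rw [T, hM]
      simp only [List.flatten_append, List.flatten_cons]
      exact List.sublist_append_right _ _
    exact h2.trans h3
  · exfalso
    have hsorted := sortedChunks_sorted ρ Γ L
    rw [hM] at hsorted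
    have := (List.pairwise_cons.1 (List.pairwise_append.1 hsorted).2.1).1 _ hmem
    omega



lemma kval_arith {h1 h2 i1 i2 len : ℕ} (hlt : h1 + 1 ≤ h2) (hi : i1 ≤ len) :
    h1 * (len + 1) + i1 < h2 * (len + 1) + i2 := by nlinarith

lemma cross_pair_unique {ρ : α → Fin k} {L : List α} (hn : L.Nodup)
    (hpw : L.Pairwise (fun a b => ρ a ≤ ρ b))
    {a b a' b' : α} (h1 : (a, b) ∈ consecPairs L) (h2 : (a', b') ∈ consecPairs L)
    (hρ : ρ a = ρ a') (hab : ρ a < ρ b) (hab' : ρ a' < ρ b') : a = a' ∧ b = b' := by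
  obtain ⟨u, v, hL⟩ := split_of_mem_cp h1
  obtain ⟨u', v', hL'⟩ := split_of_mem_cp h2
  have haa : a = a' := by
    by_contra hne
    have ha'mem : a' ∈ L := by rw [hL']; simp
    rw [hL] at ha'mem
    rcases List.mem_append.1 ha'mem with hu | hcons
    · obtain ⟨u1, u2, rfl⟩ := List.append_of_mem hu
      have e1 : L = u1 ++ a' :: (u2 ++ a :: b :: v) := by rw [hL]; simp
      have e2 : L = u' ++ a' :: (b' :: v') := hL'
      obtain ⟨-, hv'⟩ := nodup_split_unique hn e1 e2
      cases u2 with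
      | nil =>
        simp only [List.nil_append, List.cons.injEq] at hv'
        rw [← hv'.1, ← hρ] at hab'
        exact lt_irrefl _ hab'
      | cons z u2' =>
        simp only [List.cons_append, List.cons.injEq] at hv'
        have hzmem : z ∈ u1 ++ a' :: z :: u2' := by simp
        have hle : ρ z ≤ ρ a := List.pairwise_iff_forall_sublist.1 hpw
          (by rw [hL]; exact mem_left_sublist hzmem)
        rw [hv'.1] at hle
        rw [← hρ] at hab'
        exact absurd hab' (not_lt.2 hle)
    · rcases List.mem_cons.1 hcons with rfl | hcons2
      · exact hne rfl
      rcases List.mem_cons.1 hcons2 with rfl | hv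
      · rw [hρ] at hab
        exact lt_irrefl _ hab
      · have hle : ρ b ≤ ρ a' := List.pairwise_iff_forall_sublist.1 hpw
          (by rw [hL, show u ++ a :: b :: v = (u ++ [a]) ++ b :: v by simp]
              exact mem_right_sublist hv)
        rw [← hρ] at hle
        exact absurd hab (not_lt.2 hle)
  subst haa
  obtain ⟨-, hveq⟩ := nodup_split_unique hn (hL : L = u ++ a :: (b :: v))
    (hL' : L = u' ++ a :: (b' :: v'))
  simp only [List.cons.injEq] at hveq
  exact ⟨rfl, hveq.1⟩

lemma S_nonempty {ρ : α → Fin k} {Γ L : List α} (hΓn : Γ.Nodup) (hΓc : ∀ x, x ∈ Γ)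
    (hn : L.Nodup) (hcomp : ∀ x, x ∈ L) (hpw : L.Pairwise (fun a b => ρ a ≤ ρ b))
    {a b : α} (habΓ : (a, b) ∈ consecPairs Γ) (habL : (a, b) ∈ consecPairs L)
    (hab : ρ a < ρ b) (hnotT : (a, b) ∉ consecPairs (T ρ Γ L)) :
    ∃ q : α × α, q ∈ consecPairs Γ ∧ q ∈ consecPairs (T ρ Γ L) ∧
      ρ q.1 = ρ a ∧ ρ q.2 = ρ a ∧ q ∉ consecPairs L := by
  by_contra hS
  push_neg at hS
  -- every within-chunk pair of a bucket-(ρ a) chunk lies in consecPairs L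
  have hΓinfix : ∀ e ∈ chunks ρ Γ, e <:+: Γ := fun e he => by
    rw [← flatten_chunks ρ Γ]; exact infix_flatten_of_mem he
  have hin : ∀ e ∈ chunks ρ Γ, (∀ x ∈ e, ρ x = ρ a) →
      ∀ p ∈ consecPairs e, p ∈ consecPairs L := by
    intro e heC hbucket p hp
    have hpΓ : p ∈ consecPairs Γ := cp_subset_of_infix (hΓinfix e heC) hp
    have hpT : p ∈ consecPairs (T ρ Γ L) := cp_subset_of_infix (chunk_infix_T heC) hp
    have hp12 : p.1 ∈ e ∧ p.2 ∈ e := by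
      obtain ⟨x, y⟩ := p
      obtain ⟨u, v, he⟩ := split_of_mem_cp hp
      constructor <;> (rw [he]; simp)
    exact hS p hpΓ hpT (hbucket _ hp12.1) (hbucket _ hp12.2)
  have hinf : ∀ e ∈ chunks ρ Γ, (∀ x ∈ e, ρ x = ρ a) → e <:+: L := fun e heC hbucket =>
    infix_of_chain hn e (chunks_ne_nil ρ Γ e heC) (fun x _ => hcomp x) (hin e heC hbucket)
  obtain ⟨u, v, hL⟩ := split_of_mem_cp habL
  have hu_le : ∀ z ∈ u, ρ z ≤ ρ a := fun z hz =>
    List.pairwise_iff_forall_sublist.1 hpw (by rw [hL]; exact mem_left_sublist hz)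
  have hv_ge : ∀ z ∈ v, ρ b ≤ ρ z := fun z hz =>
    List.pairwise_iff_forall_sublist.1 hpw
      (by rw [hL, show u ++ a :: b :: v = (u ++ [a]) ++ b :: v by simp]
          exact mem_right_sublist hz)
  -- the chunk of a
  obtain ⟨c, hcC, hac⟩ := List.mem_flatten.1
    (by rw [flatten_chunks]; exact hΓc a : a ∈ (chunks ρ Γ).flatten)
  have hcbucket : ∀ x ∈ c, ρ x = ρ a := fun x hx => chunks_const ρ Γ c hcC x hx a hac
  obtain ⟨s, t, hst⟩ := hinf c hcC hcbucket
  obtain ⟨c1, c2, hc12⟩ := List.append_of_mem hac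
  obtain ⟨hu_eq, hrest⟩ := nodup_split_unique hn
    (by rw [← hst, hc12]; simp : L = (s ++ c1) ++ a :: (c2 ++ t))
    (hL : L = u ++ a :: (b :: v))
  have hc2 : c2 = [] := by
    cases c2 with
    | nil => rfl
    | cons z c2' =>
      exfalso
      simp only [List.cons_append, List.cons.injEq] at hrest
      have hz : ρ z = ρ a := hcbucket z (by rw [hc12]; simp)
      rw [hrest.1] at hz
      rw [hz] at hab
      exact lt_irrefl _ hab
  have ht : t = b :: v := by
    rw [hc2] at hrest
    simpa using hrest
  -- head of c and kval of c
  obtain ⟨c0, c', hc_cons⟩ := List.exists_cons_of_ne_nil (chunks_ne_nil ρ Γ c hcC)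
  have hidxc : L.idxOf c0 = s.length :=
    idxOf_split (u := s) (v := c' ++ t) hn (by rw [← hst, hc_cons]; simp)
  have hρc0 : ρ c0 = ρ a := hcbucket c0 (by rw [hc_cons]; simp)
  -- the chunk of b; b is its head
  obtain ⟨cb, hcbC, hbcb⟩ := List.mem_flatten.1
    (by rw [flatten_chunks]; exact hΓc b : b ∈ (chunks ρ Γ).flatten)
  have hcbbucket : ∀ x ∈ cb, ρ x = ρ b := fun x hx => chunks_const ρ Γ cb hcbC x hx b hbcb
  obtain ⟨d1, d2, hd12⟩ := List.append_of_mem hbcb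
  have hd1 : d1 = [] := by
    rcases List.eq_nil_or_concat d1 with rfl | ⟨d1', x, rfl⟩
    · rfl
    · exfalso
      have hxb : (x, b) ∈ consecPairs Γ :=
        cp_subset_of_infix (hΓinfix cb hcbC)
          (by rw [hd12]
              have hcc : d1'.concat x ++ b :: d2 = d1' ++ x :: b :: d2 := by simp
              rw [hcc]
              exact mem_cp_of_split)
      obtain ⟨u1, v1, hΓ1⟩ := split_of_mem_cp hxb
      obtain ⟨u2, v2, hΓ2⟩ := split_of_mem_cp habΓ
      obtain ⟨he, -⟩ := nodup_split_unique hΓn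
        (by rw [hΓ1]; simp : Γ = (u1 ++ [x]) ++ b :: v1)
        (by rw [hΓ2]; simp : Γ = (u2 ++ [a]) ++ b :: v2)
      have hxa : x = a := by
        have := congrArg List.getLast? he
        simpa using this
      have hρx : ρ x = ρ b := hcbbucket x (by rw [hd12]; simp)
      rw [hxa] at hρx
      rw [hρx] at hab
      exact lt_irrefl _ hab
  have hcb_cons : cb = b :: d2 := by rw [hd12, hd1]; rfl
  have hidxb : L.idxOf b = u.length + 1 := by
    have := idxOf_split (u := u ++ [a]) (v := v) (a := b) hn (by rw [hL]; simp)
    simpa using this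
  -- nodup and disjointness of chunks
  have hMperm := sortedChunks_perm ρ Γ L
  have hflatnd : (chunks ρ Γ).flatten.Nodup := by rw [flatten_chunks]; exact hΓn
  have hdisj := (List.nodup_flatten.1 hflatnd).2
  have hMnd : (sortedChunks ρ Γ L).Nodup :=
    hMperm.nodup_iff.2 (nodup_of_disjoint (chunks_ne_nil ρ Γ) hdisj)
  have hdisj' : ∀ e ∈ chunks ρ Γ, ∀ e' ∈ chunks ρ Γ, e ≠ e' → e.Disjoint e' :=
    fun e he e' he' hne =>
      by haveI : Std.Symm (List.Disjoint (α := α)) := ⟨fun _ _ h => h.symm⟩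
         exact List.Pairwise.forall hdisj he he' hne
  have hcneqcb : c ≠ cb := by
    intro heq
    have : ρ a = ρ b := hcbbucket a (by rw [← heq]; exact hac)
    rw [this] at hab
    exact lt_irrefl _ hab
  -- kval values
  have hslen : s.length ≤ L.length := by rw [← hst]; simp
  have hulen : u.length + 1 ≤ L.length := by rw [hL]; simp
  have hρab : (ρ a : ℕ) + 1 ≤ (ρ b : ℕ) := hab
  have hkc : kval ρ L c = (ρ a : ℕ) * (L.length + 1) + s.length := by
    rw [hc_cons, kval_cons, hρc0, hidxc]
  have hkcb : kval ρ L cb = (ρ b : ℕ) * (L.length + 1) + (u.length + 1) := by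
    rw [hcb_cons, kval_cons, hidxb]
  have hklt : kval ρ L c < kval ρ L cb := by
    rw [hkc, hkcb]
    exact kval_arith hρab hslen
  -- the dichotomy
  have hdich : ∀ e ∈ sortedChunks ρ Γ L, e ≠ c → e ≠ cb →
      kval ρ L e < kval ρ L c ∨ kval ρ L cb < kval ρ L e := by
    intro e heM hec hecb
    have heC : e ∈ chunks ρ Γ := hMperm.mem_iff.1 heM
    obtain ⟨e0, e', he_cons⟩ := List.exists_cons_of_ne_nil (chunks_ne_nil ρ Γ e heC)
    have hdc : e.Disjoint c := hdisj' e heC c hcC hec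
    have hdcb : e.Disjoint cb := hdisj' e heC cb hcbC hecb
    have he0e : e0 ∈ e := by rw [he_cons]; simp
    have he0L : e0 ∈ L := hcomp e0
    rw [hL] at he0L
    rcases List.mem_append.1 he0L with hu | hcons
    · have hle : ρ e0 ≤ ρ a := hu_le e0 hu
      rcases lt_or_eq_of_le hle with hlt | heq
      · left
        rw [hkc, he_cons, kval_cons]
        exact kval_arith hlt List.idxOf_le_length
      · -- e is a bucket-(ρ a) chunk
        have hebucket : ∀ x ∈ e, ρ x = ρ a := fun x hx =>
          (chunks_const ρ Γ e heC x hx e0 he0e).trans heq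
        have hes : ∀ z ∈ e, z ∈ s := by
          intro z hz
          have hzL : z ∈ L := hcomp z
          rw [hL] at hzL
          have hρz : ρ z = ρ a := hebucket z hz
          rcases List.mem_append.1 hzL with hzu | hzc
          · rw [← hu_eq] at hzu
            rcases List.mem_append.1 hzu with h | h
            · exact h
            · exact absurd (by rw [hc12]; exact List.mem_append_left _ h) (hdc hz)
          · exfalso
            rcases List.mem_cons.1 hzc with rfl | hzc2
            · exact hdc hz hac
            rcases List.mem_cons.1 hzc2 with rfl | hzv
            · rw [hρz] at hab; exact lt_irrefl _ hab
            · have := hv_ge z hzv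
              rw [hρz] at this
              exact absurd hab (not_lt.2 this)
        have hidxe : L.idxOf e0 < s.length :=
          idxOf_lt_of_mem_left (rest := c ++ t) hn (by rw [← hst]; simp) (hes e0 he0e)
        left
        rw [hkc, he_cons, kval_cons, heq]
        exact Nat.add_lt_add_left hidxe _
    · rcases List.mem_cons.1 hcons with rfl | hcons2
      · exact absurd hac (hdc he0e)
      rcases List.mem_cons.1 hcons2 with rfl | hv
      · exact absurd (by rw [hcb_cons]; exact List.mem_cons_self) (hdcb he0e)
      · have hge : ρ b ≤ ρ e0 := hv_ge e0 hv
        rcases lt_or_eq_of_le hge with hlt | heq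
        · right
          rw [hkcb, he_cons, kval_cons]
          exact kval_arith hlt hulen
        · right
          obtain ⟨v1, v2, hv12⟩ := List.append_of_mem hv
          have hidxe0 : L.idxOf e0 = u.length + 2 + v1.length := by
            have := idxOf_split (u := u ++ a :: b :: v1) (v := v2) (a := e0) hn
              (by rw [hL, hv12]; simp)
            simp at this
            omega
          rw [hkcb, he_cons, kval_cons, heq, hidxe0]
          exact Nat.add_lt_add_left (by omega) _
  -- conclude
  obtain ⟨M1, M2, hM12⟩ := consec_in_sorted (kval ρ L) (sortedChunks ρ Γ L) hMnd
    (sortedChunks_sorted ρ Γ L) (hMperm.mem_iff.2 hcC) (hMperm.mem_iff.2 hcbC) hklt hdich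
  apply hnotT
  have hTsplit : T ρ Γ L = (M1.flatten ++ c1) ++ a :: b :: (d2 ++ M2.flatten) := by
    rw [T, hM12, hc12, hc2, hcb_cons]
    simp
  rw [hTsplit]
  exact mem_cp_of_split


lemma pairwise_of_isLin {ρ : α → Fin k} {L : List α}
    (hL : IsLinearization (fun a b => ρ a < ρ b) L) :
    L.Pairwise (fun a b => ρ a ≤ ρ b) := by
  refine List.pairwise_iff_forall_sublist.2 (fun {a b} hs => ?_)
  by_contra hlt
  push_neg at hlt
  exact not_sublist_pair_both hL.1 hs (hL.2.2 b a hlt)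

lemma numAdj_eq_card (Γ L : List α) (hΓn : Γ.Nodup) :
    numAdj Γ L = ((consecPairs Γ).toFinset ∩ (consecPairs L).toFinset).card := by
  classical
  rw [numAdj, adjPairs]
  have hnd : ((consecPairs Γ).filter (fun ab => ab ∈ consecPairs L)).Nodup :=
    (cp_nodup hΓn).filter _
  rw [← List.toFinset_card_of_nodup hnd]
  congr 1
  ext p
  simp [List.mem_filter]

lemma key_ineq (ρ : α → Fin k) (Γ L : List α) (hΓn : Γ.Nodup) (hΓc : ∀ x, x ∈ Γ)
    (hL : IsLinearization (fun a b => ρ a < ρ b) L) :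
    numAdj Γ L ≤ numAdj Γ (T ρ Γ L) := by
  classical
  have hn := hL.1
  have hcomp := hL.2.1
  have hpw := pairwise_of_isLin hL
  rw [numAdj_eq_card Γ L hΓn, numAdj_eq_card Γ (T ρ Γ L) hΓn]
  set TT := T ρ Γ L with hTT
  set S : α × α → Finset (α × α) := fun p =>
    ((consecPairs Γ).toFinset ∩ (consecPairs TT).toFinset).filter
      (fun q => ρ q.1 = ρ p.1 ∧ ρ q.2 = ρ p.1 ∧ q ∉ consecPairs L) with hSdef
  set f : α × α → α × α := fun p =>
    if p ∈ consecPairs TT then p else if hq : (S p).Nonempty then hq.choose else p with hfdef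
  have hcross : ∀ p : α × α, p ∈ consecPairs Γ → p ∈ consecPairs L → p ∉ consecPairs TT →
      ρ p.1 < ρ p.2 ∧ (S p).Nonempty := by
    rintro ⟨a, b⟩ hpΓ hpL hpT
    have hle : ρ a ≤ ρ b := by
      apply List.pairwise_iff_forall_sublist.1 hpw
      obtain ⟨u, v, h⟩ := split_of_mem_cp hpL
      exact sublist_pair_of_split (u := u) (v := ([] : List α)) (w := v) (by rw [h]; simp)
    have hlt : ρ a < ρ b := by
      rcases lt_or_eq_of_le hle with h | h
      · exact h
      · exfalso
        obtain ⟨c, hcC, hpc⟩ := mem_cp_chunk_of_same ρ Γ a b hpΓ h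
        exact hpT (cp_subset_of_infix (chunk_infix_T hcC) hpc)
    refine ⟨hlt, ?_⟩
    obtain ⟨q, h1, h2, h3, h4, h5⟩ := S_nonempty hΓn hΓc hn hcomp hpw hpΓ hpL hlt hpT
    exact ⟨q, Finset.mem_filter.2 ⟨Finset.mem_inter.2
      ⟨List.mem_toFinset.2 h1, List.mem_toFinset.2 h2⟩, h3, h4, h5⟩⟩
  apply Finset.card_le_card_of_injOn f
  · intro p hp
    simp only [Finset.mem_coe, Finset.mem_inter, List.mem_toFinset] at hp
    by_cases hpT : p ∈ consecPairs TT
    · simp only [hfdef, if_pos hpT]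
      simp only [Finset.mem_coe, Finset.mem_inter, List.mem_toFinset]
      exact ⟨hp.1, hpT⟩
    · obtain ⟨hlt, hne⟩ := hcross p hp.1 hp.2 hpT
      simp only [hfdef, if_neg hpT, dif_pos hne]
      exact (Finset.mem_filter.1 hne.choose_spec).1
  · intro p hp q hq hfpq
    simp only [Finset.coe_inter, Set.mem_inter_iff, Set.mem_setOf_eq, Finset.mem_coe,
      List.mem_toFinset] at hp hq
    by_cases hpT : p ∈ consecPairs TT <;> by_cases hqT : q ∈ consecPairs TT
    · rw [hfdef] at hfpq
      simpa [if_pos hpT, if_pos hqT] using hfpq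
    · exfalso
      obtain ⟨hlt, hne⟩ := hcross q hq.1 hq.2 hqT
      rw [hfdef] at hfpq
      simp only [if_pos hpT, if_neg hqT, dif_pos hne] at hfpq
      exact (Finset.mem_filter.1 hne.choose_spec).2.2.2 (hfpq ▸ hp.2)
    · exfalso
      obtain ⟨hlt, hne⟩ := hcross p hp.1 hp.2 hpT
      rw [hfdef] at hfpq
      simp only [if_neg hpT, if_pos hqT, dif_pos hne] at hfpq
      exact (Finset.mem_filter.1 hne.choose_spec).2.2.2 (hfpq ▸ hq.2)
    · obtain ⟨hltp, hnep⟩ := hcross p hp.1 hp.2 hpT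
      obtain ⟨hltq, hneq⟩ := hcross q hq.1 hq.2 hqT
      rw [hfdef] at hfpq
      simp only [if_neg hpT, if_neg hqT, dif_pos hnep, dif_pos hneq] at hfpq
      have hsp := Finset.mem_filter.1 hnep.choose_spec
      have hsq := Finset.mem_filter.1 hneq.choose_spec
      have hρpq : ρ p.1 = ρ q.1 := by
        rw [← hsp.2.1, ← hsq.2.1, hfpq]
      obtain ⟨a, b⟩ := p
      obtain ⟨a', b'⟩ := q
      obtain ⟨h1, h2⟩ := cross_pair_unique hn hpw hp.2 hq.2 hρpq hltp hltq
      simp [h1, h2]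

lemma exists_max_on {β : Type*} : ∀ (l : List β), l ≠ [] → ∀ (g : β → ℕ),
    ∃ m ∈ l, ∀ x ∈ l, g x ≤ g m
  | [], h, _ => absurd rfl h
  | [a], _, g => ⟨a, by simp, by simp⟩
  | a :: b :: l, _, g => by
    obtain ⟨m, hm, hmax⟩ := exists_max_on (b :: l) (by simp) g
    by_cases h : g a ≤ g m
    · refine ⟨m, List.mem_cons_of_mem _ hm, fun x hx => ?_⟩
      rcases List.mem_cons.1 hx with rfl | hx
      · exact h
      · exact hmax x hx
    · refine ⟨a, List.mem_cons_self, fun x hx => ?_⟩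
      rcases List.mem_cons.1 hx with rfl | hx
      · exact le_rfl
      · exact le_trans (hmax x hx) (le_of_not_ge h)

end AdjProof

open AdjProof in
/-- Let `Γ` be a linear order on a finite set and let `ρ` describe a weak order with buckets
`Σ_1, …, Σ_k` (where `a ≺ b` iff `ρ a < ρ b`). Then there exists a linear extension `L` of the
weak order maximizing the number of adjacencies with `Γ` in which every block of every bucket
appears consecutively, in the same order as the corresponding substring of `Γ`. -/
theorem exists_max_adjacency_linearization_respecting_blocks
    {α : Type*} [DecidableEq α] [Fintype α] (k : ℕ)
    (Γ : List α) (hΓn : Γ.Nodup) (hΓc : ∀ x, x ∈ Γ)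
    (ρ : α → Fin k) :
    ∃ L : List α,
      IsLinearization (fun a b => ρ a < ρ b) L ∧
      (∀ L' : List α, IsLinearization (fun a b => ρ a < ρ b) L' →
        numAdj Γ L' ≤ numAdj Γ L) ∧
      (∀ h : Fin k, ∀ w : List α, IsBlock Γ ρ h w → w <:+: L) := by
  classical
  have hTF : ∀ L0 : List α, T ρ Γ L0 ∈ (chunks ρ Γ).permutations.map List.flatten := by
    intro L0
    exact List.mem_map.2 ⟨_, List.mem_permutations.2 (sortedChunks_perm ρ Γ L0), rfl⟩
  have hFne : (chunks ρ Γ).permutations.map List.flatten ≠ [] :=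
    List.ne_nil_of_mem (hTF Γ)
  have hTlin : ∀ L0 : List α, IsLinearization (fun a b => ρ a < ρ b) (T ρ Γ L0) :=
    fun L0 => isLin_T ρ Γ L0 hΓn hΓc
  set g : List α → ℕ := fun L0 =>
    if IsLinearization (fun a b => ρ a < ρ b) L0 then numAdj Γ L0 + 1 else 0 with hg
  obtain ⟨m, hmF, hmax⟩ := exists_max_on _ hFne g
  have hm1 : 1 ≤ g m := by
    refine le_trans ?_ (hmax _ (hTF Γ))
    rw [hg]
    simp only [if_pos (hTlin Γ)]
    omega
  have hmlin : IsLinearization (fun a b => ρ a < ρ b) m := by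
    by_contra h
    rw [hg] at hm1
    simp [if_neg h] at hm1
  refine ⟨T ρ Γ m, hTlin m, ?_, ?_⟩
  · intro L' hL'
    have h1 : numAdj Γ L' ≤ numAdj Γ (T ρ Γ L') := key_ineq ρ Γ L' hΓn hΓc hL'
    have h2 : numAdj Γ (T ρ Γ L') + 1 = g (T ρ Γ L') := by rw [hg]; simp [if_pos (hTlin L')]
    have h3 : g (T ρ Γ L') ≤ g m := hmax _ (hTF L')
    have h4 : g m = numAdj Γ m + 1 := by rw [hg]; simp [if_pos hmlin]
    have h5 : numAdj Γ m ≤ numAdj Γ (T ρ Γ m) := key_ineq ρ Γ m hΓn hΓc hmlin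
    omega
  · intro h w hw
    exact chunk_infix_T (block_mem_chunks hw)
end
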